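/- arXiv:2210.09443 — 5 statements merged into one kernel-verified Lean document; each statement's English description precedes it below -/
import Mathlib

section
/- Let f ∈ L¹(Ω, ℝ^d). Then the convex-set valued map F(x) = conv{f(x), −f(x)} is measurable and integrably bounded, and its Aumann integral equals { ∫_Ω k f dμ : k ∈ L^∞(Ω, ℝ), ‖k‖_∞ ≤ 1 }. -/
open MeasureTheory

variable {d : ℕ}

/-- Measurability of a closed-set valued map. -/
def SetValuedMeasurable {Ω : Type*} [MeasurableSpace Ω]
    (F : Ω → Set (EuclideanSpace ℝ (Fin d))) : Prop :=
  ∀ U : Set (EuclideanSpace ℝ (Fin d)), IsOpen U → MeasurableSet {x | (F x ∩ U).Nonempty}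

/-- `F` is integrably bounded: `F x ⊆ k x • B` a.e. for some nonnegative `k ∈ L¹`. -/
def IntegrablyBounded {Ω : Type*} [MeasurableSpace Ω] (μ : Measure Ω)
    (F : Ω → Set (EuclideanSpace ℝ (Fin d))) : Prop :=
  ∃ k : Ω → ℝ, (∀ x, 0 ≤ k x) ∧ Integrable k μ ∧
    ∀ᵐ x ∂μ, F x ⊆ Metric.closedBall 0 (k x)

/-- The Aumann integral of a set-valued map: the set of integrals of integrable
measurable selections. -/
def AumannIntegral {Ω : Type*} [MeasurableSpace Ω] (μ : Measure Ω)
    (F : Ω → Set (EuclideanSpace ℝ (Fin d))) : Set (EuclideanSpace ℝ (Fin d)) :=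
  {y | ∃ g : Ω → EuclideanSpace ℝ (Fin d), Measurable g ∧ Integrable g μ ∧
    (∀ᵐ x ∂μ, g x ∈ F x) ∧ ∫ x, g x ∂μ = y}

lemma mem_hull_pair_iff {E : Type*} [NormedAddCommGroup E] [NormedSpace ℝ E] (a y : E) :
    y ∈ convexHull ℝ ({a, -a} : Set E) ↔ ∃ c : ℝ, |c| ≤ 1 ∧ c • a = y := by
  rw [convexHull_pair]
  constructor
  · rintro ⟨s, t, hs, ht, hst, h⟩
    refine ⟨s - t, ?_, ?_⟩
    · rw [abs_le]; constructor <;> linarith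
    · rw [sub_smul, ← h, smul_neg]; abel
  · rintro ⟨c, hc, h⟩
    rw [abs_le] at hc
    refine ⟨(1 + c) / 2, (1 - c) / 2, by linarith, by linarith, by ring, ?_⟩
    rw [← h, smul_neg, ← sub_eq_add_neg, ← sub_smul, show (1 + c) / 2 - (1 - c) / 2 = c by ring]

/-- For `f ∈ L¹(Ω, ℝ^d)`, the map `F x = conv{f x, -f x}` is measurable and integrably
bounded, and its Aumann integral is `{∫ k f dμ : k ∈ L^∞, ‖k‖_∞ ≤ 1}`. -/
theorem aumann_integral_segment {Ω : Type*} [MeasurableSpace Ω] (μ : Measure Ω)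
    [SigmaFinite μ] (hcompl : μ.IsComplete)
    (f : Ω → EuclideanSpace ℝ (Fin d)) (hf : Measurable f) (hfi : Integrable f μ) :
    SetValuedMeasurable (fun x => convexHull ℝ {f x, -f x}) ∧
    IntegrablyBounded μ (fun x => convexHull ℝ {f x, -f x}) ∧
    AumannIntegral μ (fun x => convexHull ℝ {f x, -f x}) =
      {y | ∃ k : Ω → ℝ, Measurable k ∧ (∀ᵐ x ∂μ, |k x| ≤ 1) ∧
        ∫ x, k x • f x ∂μ = y} := by
  classical
  refine ⟨?_, ?_, ?_⟩
  · -- measurability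
    intro U hU
    have : {x | ((convexHull ℝ {f x, -f x}) ∩ U).Nonempty} =
        ⋃ q : ℚ, ⋃ _ : |(q : ℝ)| ≤ 1, {x | (q : ℝ) • f x ∈ U} := by
      ext x
      simp only [Set.mem_setOf_eq, Set.mem_iUnion]
      constructor
      · rintro ⟨y, hy, hyU⟩
        obtain ⟨c, hc, rfl⟩ := (mem_hull_pair_iff (f x) y).1 hy
        have hV : IsOpen ((fun t : ℝ => t • f x) ⁻¹' U) :=
          hU.preimage (continuous_id.smul continuous_const)
        obtain ⟨ε, hε, hball⟩ := Metric.isOpen_iff.1 hV c hyU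
        rw [abs_le] at hc
        obtain ⟨q, hq1, hq2⟩ := exists_rat_btwn
          (show max (c - ε) (-1) < min (c + ε) 1 by
            simp only [max_lt_iff, lt_min_iff]; constructor <;> constructor <;> linarith)
        simp only [max_lt_iff, lt_min_iff] at hq1 hq2
        refine ⟨q, by rw [abs_le]; constructor <;> linarith, ?_⟩
        exact hball (by rw [Metric.mem_ball, Real.dist_eq, abs_lt]; constructor <;> linarith)
      · rintro ⟨q, hq, hqU⟩
        exact ⟨(q : ℝ) • f x, (mem_hull_pair_iff (f x) _).2 ⟨q, hq, rfl⟩, hqU⟩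
    rw [this]
    exact MeasurableSet.iUnion fun q => MeasurableSet.iUnion fun _ =>
      (hf.const_smul (q : ℝ) : Measurable fun x => (q : ℝ) • f x) hU.measurableSet
  · -- integrably bounded
    refine ⟨fun x => ‖f x‖, fun x => norm_nonneg _, hfi.norm,
      Filter.Eventually.of_forall fun x y hy => ?_⟩
    obtain ⟨c, hc, rfl⟩ := (mem_hull_pair_iff (f x) y).1 hy
    rw [Metric.mem_closedBall, dist_zero_right, norm_smul]
    calc ‖c‖ * ‖f x‖ ≤ 1 * ‖f x‖ := by
          exact mul_le_mul_of_nonneg_right hc (norm_nonneg _)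
      _ = ‖f x‖ := one_mul _
  · -- Aumann integral
    ext y
    simp only [AumannIntegral, Set.mem_setOf_eq]
    constructor
    · rintro ⟨g, hg, hgi, hmem, rfl⟩
      set k : Ω → ℝ := fun x =>
        if f x = 0 then 0 else (inner ℝ (g x) (f x) : ℝ) / ‖f x‖ ^ 2 with hk_def
      have hkm : Measurable k := by
        have hset : MeasurableSet {x | f x = 0} := hf (measurableSet_singleton 0)
        exact Measurable.ite hset measurable_const
          ((hg.inner hf).div (hf.norm.pow measurable_const))
      have hae : ∀ᵐ x ∂μ, |k x| ≤ 1 ∧ k x • f x = g x := by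
        filter_upwards [hmem] with x hx
        obtain ⟨c, hc, hcy⟩ := (mem_hull_pair_iff (f x) (g x)).1 hx
        by_cases h : f x = 0
        · have hk : k x = 0 := by simp [hk_def, h]
          refine ⟨by simp [hk], ?_⟩
          rw [hk, ← hcy, h, smul_zero, smul_zero]
        · have hk : k x = c := by
            have hnorm : ‖f x‖ ≠ 0 := norm_ne_zero_iff.2 h
            show (if f x = 0 then 0 else (inner ℝ (g x) (f x) : ℝ) / ‖f x‖ ^ 2) = c
            rw [if_neg h, ← hcy, real_inner_smul_left, real_inner_self_eq_norm_sq,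
              mul_div_assoc, div_self (pow_ne_zero 2 hnorm), mul_one]
          exact ⟨hk ▸ hc, by rw [hk, hcy]⟩
      refine ⟨k, hkm, hae.mono fun x hx => hx.1, ?_⟩
      exact integral_congr_ae (hae.mono fun x hx => hx.2)
    · rintro ⟨k, hk, hk1, rfl⟩
      refine ⟨fun x => k x • f x, hk.smul hf, ?_, ?_, rfl⟩
      · refine hfi.mono (hk.smul hf).aestronglyMeasurable ?_
        filter_upwards [hk1] with x hx
        rw [norm_smul, Real.norm_eq_abs]
        calc |k x| * ‖f x‖ ≤ 1 * ‖f x‖ := mul_le_mul_of_nonneg_right hx (norm_nonneg _)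
          _ = ‖f x‖ := one_mul _
      · filter_upwards [hk1] with x hx
        exact (mem_hull_pair_iff (f x) _).2 ⟨k x, hx, rfl⟩
end

section
/- If F₁, F₂ : Ω → 𝒦_{bcs}(ℝ^d) are measurable and integrably bounded, then the set of integrable selections satisfies S¹(Ω, F₁+F₂) = S¹(Ω, F₁) + S¹(Ω, F₂), where F₁+F₂ denotes the pointwise Minkowski sum. -/
open MeasureTheory
open scoped Pointwise
open Metric

variable {d : ℕ}

/-- The set `S¹(Ω, F)` of integrable measurable selections of `F`. -/
def Sel1 {Ω : Type*} [MeasurableSpace Ω] (μ : Measure Ω)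
    (F : Ω → Set (EuclideanSpace ℝ (Fin d))) : Set (Ω → EuclideanSpace ℝ (Fin d)) :=
  {g | Measurable g ∧ Integrable g μ ∧ ∀ᵐ x ∂μ, g x ∈ F x}

lemma meas_infDist {Ω : Type*} [MeasurableSpace Ω] {F : Ω → Set (EuclideanSpace ℝ (Fin d))}
    (hF : SetValuedMeasurable F) (hne : ∀ x, (F x).Nonempty) (v : EuclideanSpace ℝ (Fin d)) :
    Measurable fun x => Metric.infDist v (F x) := by
  apply measurable_of_Iio
  intro r
  rcases le_or_gt r 0 with hr | hr
  · have h : (fun x => Metric.infDist v (F x)) ⁻¹' Set.Iio r = ∅ := by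
      ext x
      simp only [Set.mem_preimage, Set.mem_Iio, Set.mem_empty_iff_false, iff_false, not_lt]
      exact hr.trans Metric.infDist_nonneg
    rw [h]; exact MeasurableSet.empty
  · have h : (fun x => Metric.infDist v (F x)) ⁻¹' Set.Iio r
        = {x | (F x ∩ Metric.ball v r).Nonempty} := by
      ext x
      simp only [Set.mem_preimage, Set.mem_Iio, Set.mem_setOf_eq]
      rw [Metric.infDist_lt_iff (hne x)]
      constructor
      · rintro ⟨y, hy, hd⟩
        exact ⟨y, hy, by rwa [Metric.mem_ball, dist_comm]⟩
      · rintro ⟨y, hy, hd⟩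
        exact ⟨y, hy, by rwa [Metric.mem_ball, dist_comm] at hd⟩
    rw [h]; exact hF _ Metric.isOpen_ball

lemma meas_infDist_comp {Ω : Type*} [MeasurableSpace Ω] {F : Ω → Set (EuclideanSpace ℝ (Fin d))}
    (hF : SetValuedMeasurable F) (hne : ∀ x, (F x).Nonempty)
    {w : Ω → EuclideanSpace ℝ (Fin d)} (hw : Measurable w) :
    Measurable fun x => Metric.infDist (w x) (F x) := by
  obtain ⟨u, hu⟩ := TopologicalSpace.exists_dense_seq (EuclideanSpace ℝ (Fin d))
  have key : ∀ x, Metric.infDist (w x) (F x)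
      = ⨅ n, (dist (w x) (u n) + Metric.infDist (u n) (F x)) := by
    intro x
    apply le_antisymm
    · apply le_ciInf
      intro n
      calc Metric.infDist (w x) (F x) ≤ Metric.infDist (u n) (F x) + dist (w x) (u n) :=
            Metric.infDist_le_infDist_add_dist
        _ = dist (w x) (u n) + Metric.infDist (u n) (F x) := by ring
    · apply le_of_forall_pos_le_add
      intro ε hε
      obtain ⟨y, hy, hdy⟩ := Metric.infDist_lt_iff (hne x) |>.mp
        (lt_add_of_pos_right _ (by linarith : (0:ℝ) < ε/2) :
          Metric.infDist (w x) (F x) < Metric.infDist (w x) (F x) + ε/2)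
      obtain ⟨n, hn⟩ := Metric.denseRange_iff.mp hu y (ε/4) (by linarith)
      have hb : BddBelow (Set.range fun n => dist (w x) (u n) + Metric.infDist (u n) (F x)) := by
        refine ⟨0, ?_⟩
        rintro r ⟨n, rfl⟩
        exact add_nonneg dist_nonneg Metric.infDist_nonneg
      refine (ciInf_le hb n).trans ?_
      have h1 : Metric.infDist (u n) (F x) ≤ dist (u n) y := Metric.infDist_le_dist_of_mem hy
      have h2 : dist (w x) (u n) ≤ dist (w x) y + dist y (u n) := dist_triangle _ _ _
      have h3 : dist (u n) y = dist y (u n) := dist_comm _ _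
      linarith
  simp only [key]
  exact Measurable.iInf fun n => (hw.dist measurable_const).add (meas_infDist hF hne (u n))

/-- If `F₁, F₂` are measurable and integrably bounded maps into bounded, convex,
symmetric, closed nonempty sets, then `S¹(Ω, F₁+F₂) = S¹(Ω, F₁) + S¹(Ω, F₂)`. -/
theorem selections_additive {Ω : Type*} [MeasurableSpace Ω]
    (μ : Measure Ω) [SigmaFinite μ] (hcompl : μ.IsComplete)
    (F₁ F₂ : Ω → Set (EuclideanSpace ℝ (Fin d)))
    (hne₁ : ∀ x, (F₁ x).Nonempty) (hb₁ : ∀ x, Bornology.IsBounded (F₁ x))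
    (hc₁ : ∀ x, Convex ℝ (F₁ x)) (hs₁ : ∀ x, ∀ v ∈ F₁ x, -v ∈ F₁ x)
    (hcl₁ : ∀ x, IsClosed (F₁ x)) (hF₁ : SetValuedMeasurable F₁)
    (hib₁ : IntegrablyBounded μ F₁)
    (hne₂ : ∀ x, (F₂ x).Nonempty) (hb₂ : ∀ x, Bornology.IsBounded (F₂ x))
    (hc₂ : ∀ x, Convex ℝ (F₂ x)) (hs₂ : ∀ x, ∀ v ∈ F₂ x, -v ∈ F₂ x)
    (hcl₂ : ∀ x, IsClosed (F₂ x)) (hF₂ : SetValuedMeasurable F₂)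
    (hib₂ : IntegrablyBounded μ F₂) :
    Sel1 μ (fun x => F₁ x + F₂ x) = Sel1 μ F₁ + Sel1 μ F₂ := by
  classical
  ext g
  simp only [Set.mem_add]
  constructor
  · rintro ⟨hgm, hgi, hgmem⟩
    obtain ⟨k₁, hk₁0, hk₁i, hk₁b⟩ := hib₁
    obtain ⟨u, hu⟩ := TopologicalSpace.exists_dense_seq (EuclideanSpace ℝ (Fin d))
    -- the good measurable set A
    obtain ⟨t, hts, htm, ht0⟩ := exists_measurable_superset_of_null (ae_iff.mp hgmem)
    set A : Set Ω := tᶜ with hAdef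
    have hAm : MeasurableSet A := htm.compl
    have hAmem : ∀ x ∈ A, g x ∈ F₁ x + F₂ x := by
      intro x hx
      by_contra h
      exact hx (hts h)
    have hAae : ∀ᵐ x ∂μ, x ∈ A := by
      rw [ae_iff]
      refine measure_mono_null ?_ ht0
      intro x hx
      simpa [hAdef] using hx
    -- distances
    set ρ : ℕ → Ω → ℝ := fun n x =>
      Metric.infDist (u n) (F₁ x) + Metric.infDist (g x - u n) (F₂ x) with hρdef
    have hρm : ∀ n, Measurable (ρ n) := fun n =>
      (meas_infDist hF₁ hne₁ (u n)).add
        (meas_infDist_comp hF₂ hne₂ (hgm.sub measurable_const))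
    have hρ0 : ∀ n x, 0 ≤ ρ n x := fun n x =>
      add_nonneg Metric.infDist_nonneg Metric.infDist_nonneg
    have hρle : ∀ x n (w : EuclideanSpace ℝ (Fin d)),
        w ∈ F₁ x → g x - w ∈ F₂ x → ρ n x ≤ 2 * dist (u n) w := by
      intro x n w hw1 hw2
      have h1 : Metric.infDist (u n) (F₁ x) ≤ dist (u n) w :=
        Metric.infDist_le_dist_of_mem hw1
      have h2 : Metric.infDist (g x - u n) (F₂ x) ≤ dist (g x - u n) (g x - w) :=
        Metric.infDist_le_dist_of_mem hw2
      have h3 : dist (g x - u n) (g x - w) = dist (u n) w := dist_sub_left _ _ _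
      simp only [hρdef]
      linarith
    -- epsilons
    set ε : ℕ → ℝ := fun k => (2:ℝ)⁻¹ ^ k with hεdef
    have hε : ∀ k, 0 < ε k := fun k => by positivity
    have hε1 : ∀ k, ε k ≤ 1 := fun k => pow_le_one₀ (by norm_num) (by norm_num)
    have hεto : Filter.Tendsto ε Filter.atTop (nhds 0) :=
      tendsto_pow_atTop_nhds_zero_of_lt_one (by norm_num) (by norm_num)
    -- approximate nonemptiness
    have hSk : ∀ x ∈ A, ∀ k : ℕ, ∃ n, ρ n x < ε k := by
      intro x hx k
      obtain ⟨a, ha, b, hb, hab⟩ := hAmem x hx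
      obtain ⟨n, hn⟩ := Metric.denseRange_iff.mp hu a (ε k / 4) (by linarith [hε k])
      have hgb : g x - a ∈ F₂ x := by
        have hba : b = g x - a := eq_sub_of_add_eq' hab
        rwa [hba] at hb
      have := hρle x n a ha hgb
      have hd : dist (u n) a = dist a (u n) := dist_comm _ _
      refine ⟨n, ?_⟩
      linarith [hε k]
    -- minimal approximate norm
    set m : ℕ → Ω → ENNReal := fun k x =>
      ⨅ n, if ρ n x < ε k then (‖u n‖₊ : ENNReal) else ⊤ with hmdef
    have hmm : ∀ k, Measurable (m k) := by
      intro k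
      refine Measurable.iInf fun n => Measurable.ite ?_ measurable_const measurable_const
      exact measurableSet_lt (hρm n) measurable_const
    have hmle : ∀ k x n, ρ n x < ε k → m k x ≤ (‖u n‖₊ : ENNReal) := by
      intro k x n hn
      refine (iInf_le _ n).trans ?_
      rw [if_pos hn]
    have hmlt : ∀ x ∈ A, ∀ k, m k x < ⊤ := by
      intro x hx k
      obtain ⟨n, hn⟩ := hSk x hx k
      exact lt_of_le_of_lt (hmle k x n hn) ENNReal.coe_lt_top
    -- the selection predicate
    set P : ℕ → Ω → ℕ → Prop := fun k x n =>
      x ∉ A ∨ (ρ n x < ε k ∧ (‖u n‖₊ : ENNReal) < m k x + ENNReal.ofReal (ε k)) with hPdef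
    have hPex : ∀ k x, ∃ n, P k x n := by
      intro k x
      by_cases hx : x ∈ A
      · have h1 : m k x < m k x + ENNReal.ofReal (ε k) := by
          refine ENNReal.lt_add_right (hmlt x hx k).ne ?_
          simp only [ne_eq, ENNReal.ofReal_eq_zero, not_le]
          exact hε k
        rw [hmdef] at h1
        obtain ⟨n, hn⟩ := iInf_lt_iff.mp h1
        by_cases hc : ρ n x < ε k
        · rw [if_pos hc] at hn
          refine ⟨n, Or.inr ⟨hc, ?_⟩⟩
          rwa [hmdef]
        · rw [if_neg hc] at hn
          exact absurd hn (not_lt.mpr le_top)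
      · exact ⟨0, Or.inl hx⟩
    have hPm : ∀ k n, MeasurableSet {x | P k x n} := by
      intro k n
      refine MeasurableSet.union hAm.compl ?_
      refine MeasurableSet.inter ?_ ?_
      · exact measurableSet_lt (hρm n) measurable_const
      · exact ((hmm k).add (measurable_const : Measurable fun _ : Ω => ENNReal.ofReal (ε k)))
          (measurableSet_Ioi : MeasurableSet (Set.Ioi ((‖u n‖₊ : ENNReal))))
    set nsel : ℕ → Ω → ℕ := fun k x => Nat.find (hPex k x) with hnseldef
    have hnselm : ∀ k, Measurable (nsel k) := fun k =>
      measurable_find (hPex k) (hPm k)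
    set v : ℕ → Ω → EuclideanSpace ℝ (Fin d) := fun k x =>
      if x ∈ A then u (nsel k x) else 0 with hvdef
    have hvm : ∀ k, Measurable (v k) := by
      intro k
      refine Measurable.ite hAm ?_ measurable_const
      exact measurable_from_top.comp (hnselm k)
    have hvspec : ∀ k, ∀ x ∈ A, v k x = u (nsel k x) ∧ ρ (nsel k x) x < ε k ∧
        (‖u (nsel k x)‖₊ : ENNReal) < m k x + ENNReal.ofReal (ε k) := by
      intro k x hx
      have hspec := Nat.find_spec (hPex k x)
      rcases hspec with h | h
      · exact absurd hx h
      · exact ⟨if_pos hx, h.1, h.2⟩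
    -- the minimal-norm exact selection
    have hmin : ∀ x, x ∈ A → ∃ p : EuclideanSpace ℝ (Fin d),
        (p ∈ F₁ x ∧ g x - p ∈ F₂ x) ∧
        ∀ w, w ∈ F₁ x → g x - w ∈ F₂ x → ‖p‖ ≤ ‖w‖ := by
      intro x hx
      set G : Set (EuclideanSpace ℝ (Fin d)) := {w | w ∈ F₁ x ∧ g x - w ∈ F₂ x} with hGdef
      have hGne : G.Nonempty := by
        obtain ⟨a, ha, b, hb, hab⟩ := hAmem x hx
        refine ⟨a, ha, ?_⟩
        have hba : b = g x - a := eq_sub_of_add_eq' hab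
        rwa [hba] at hb
      have hGc : IsClosed G := by
        refine IsClosed.inter (hcl₁ x) ?_
        exact IsClosed.preimage (continuous_const.sub continuous_id) (hcl₂ x)
      have hGb : Bornology.IsBounded G := (hb₁ x).subset fun w hw => hw.1
      obtain ⟨p, hpG, hpmin⟩ := (Metric.isCompact_of_isClosed_isBounded hGc hGb).exists_isMinOn
        hGne continuous_norm.continuousOn
      exact ⟨p, hpG, fun w hw1 hw2 => hpmin (⟨hw1, hw2⟩ : w ∈ G)⟩
    set L : Ω → EuclideanSpace ℝ (Fin d) := fun x =>
      if hx : x ∈ A then (hmin x hx).choose else 0 with hLdef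
    have hL1 : ∀ x (hx : x ∈ A), L x ∈ F₁ x ∧ g x - L x ∈ F₂ x := by
      intro x hx
      simp only [hLdef, dif_pos hx]
      exact (hmin x hx).choose_spec.1
    have hLmin : ∀ x (hx : x ∈ A), ∀ w, w ∈ F₁ x → g x - w ∈ F₂ x → ‖L x‖ ≤ ‖w‖ := by
      intro x hx
      simp only [hLdef, dif_pos hx]
      exact (hmin x hx).choose_spec.2
    -- uniqueness of the minimal-norm point
    have huniq : ∀ x (hx : x ∈ A), ∀ w, w ∈ F₁ x → g x - w ∈ F₂ x → ‖w‖ ≤ ‖L x‖ → w = L x := by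
      intro x hx w hw1 hw2 hwn
      by_contra hne
      have hnorm : ‖w‖ = ‖L x‖ := le_antisymm hwn (hLmin x hx w hw1 hw2)
      set z : EuclideanSpace ℝ (Fin d) := (1/2 : ℝ) • w + (1/2 : ℝ) • (L x) with hzdef
      have hz1 : z ∈ F₁ x := (hc₁ x) hw1 (hL1 x hx).1 (by norm_num) (by norm_num) (by norm_num)
      have hz2 : g x - z ∈ F₂ x := by
        have hrw : g x - z = (1/2 : ℝ) • (g x - w) + (1/2 : ℝ) • (g x - L x) := by
          rw [hzdef]
          module
        rw [hrw]
        exact (hc₂ x) hw2 (hL1 x hx).2 (by norm_num) (by norm_num) (by norm_num)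
      have hpar := parallelogram_law_with_norm ℝ w (L x)
      have hwp : 0 < ‖w - L x‖ := by
        rw [norm_pos_iff]
        exact sub_ne_zero_of_ne hne
      have hzn : ‖z‖ < ‖L x‖ := by
        have h1 : ‖z‖ = (1/2 : ℝ) * ‖w + L x‖ := by
          have : z = (1/2 : ℝ) • (w + L x) := by rw [hzdef]; module
          rw [this, norm_smul]
          norm_num
        have h2 : ‖w + L x‖ < 2 * ‖L x‖ := by
          nlinarith [norm_nonneg (w + L x), norm_nonneg (L x), hnorm]
        linarith
      exact absurd (hLmin x hx z hz1 hz2) (not_le.mpr hzn)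
    -- convergence of the approximations
    have htend : ∀ x, Filter.Tendsto (fun k => v k x) Filter.atTop (nhds (L x)) := by
      intro x
      by_cases hx : x ∈ A
      · -- quantitative bounds on v k x
        have hvbound : ∀ k, ‖v k x‖ ≤ ‖L x‖ + 2 * ε k ∧
            Metric.infDist (v k x) (F₁ x) + Metric.infDist (g x - v k x) (F₂ x) < ε k := by
          intro k
          obtain ⟨hveq, hρv, hnv⟩ := hvspec k x hx
          constructor
          · -- bound m k x
            obtain ⟨n, hn⟩ := Metric.denseRange_iff.mp hu (L x) (ε k / 4) (by linarith [hε k])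
            have hρn : ρ n x < ε k := by
              have := hρle x n (L x) (hL1 x hx).1 (hL1 x hx).2
              have hd : dist (u n) (L x) = dist (L x) (u n) := dist_comm _ _
              linarith [hε k]
            have hmb : m k x ≤ ENNReal.ofReal (‖L x‖ + ε k / 4) := by
              refine (hmle k x n hρn).trans ?_
              rw [← enorm_eq_nnnorm, ← ofReal_norm]
              apply ENNReal.ofReal_le_ofReal
              calc ‖u n‖ ≤ ‖L x‖ + dist (u n) (L x) := by
                    have := norm_le_norm_add_norm_sub' (u n) (L x)
                    rw [dist_eq_norm]
                    linarith [norm_sub_rev (u n) (L x), dist_eq_norm (u n) (L x)]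
                _ ≤ ‖L x‖ + ε k / 4 := by
                    rw [dist_comm]
                    linarith
            have hlt : (‖u (nsel k x)‖₊ : ENNReal)
                < ENNReal.ofReal (‖L x‖ + ε k / 4 + ε k) := by
              refine hnv.trans_le ?_
              rw [ENNReal.ofReal_add (by linarith [norm_nonneg (L x), hε k]) (hε k).le]
              exact add_le_add_left hmb _
            rw [← enorm_eq_nnnorm, ← ofReal_norm] at hlt
            have := (ENNReal.ofReal_lt_ofReal_iff
              (by linarith [norm_nonneg (L x), hε k])).mp hlt
            rw [hveq]
            linarith [hε k]
          · rw [hveq]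
            exact hρv
        rw [Metric.tendsto_atTop]
        intro δ hδ
        set C : Set (EuclideanSpace ℝ (Fin d)) :=
          Metric.closedBall 0 (‖L x‖ + 2) \ Metric.ball (L x) δ with hCdef
        have hvball : ∀ k, v k x ∈ Metric.closedBall (0 : EuclideanSpace ℝ (Fin d)) (‖L x‖ + 2) := by
          intro k
          rw [Metric.mem_closedBall, dist_zero_right]
          have := (hvbound k).1
          linarith [hε1 k]
        set f : EuclideanSpace ℝ (Fin d) → ℝ := fun w =>
          Metric.infDist w (F₁ x) + Metric.infDist (g x - w) (F₂ x)
            + max (‖w‖ - ‖L x‖) 0 with hfdef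
        clear_value f
        have hfc : Continuous f := by
          rw [hfdef]
          refine Continuous.add (Continuous.add ?_ ?_) ?_
          · exact Metric.continuous_infDist_pt _
          · exact (Metric.continuous_infDist_pt _).comp (continuous_const.sub continuous_id)
          · exact (continuous_norm.sub continuous_const).max continuous_const
        have hfv : ∀ k, f (v k x) < 3 * ε k := by
          intro k
          obtain ⟨hb1, hb2⟩ := hvbound k
          have hmax : max (‖v k x‖ - ‖L x‖) 0 ≤ 2 * ε k := by
            apply max_le
            · linarith
            · linarith [hε k]
          simp only [hfdef]
          linarith
        by_cases hC : C.Nonempty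
        · have hCc : IsClosed C :=
            Metric.isClosed_closedBall.inter Metric.isOpen_ball.isClosed_compl
          have hCb : Bornology.IsBounded C :=
            Metric.isBounded_closedBall.subset Set.diff_subset
          obtain ⟨w₀, hw₀C, hw₀min⟩ :=
            (Metric.isCompact_of_isClosed_isBounded hCc hCb).exists_isMinOn hC
              hfc.continuousOn
          have hfw₀pos : 0 < f w₀ := by
            rcases (lt_or_eq_of_le (by
              simp only [hfdef]
              have := Metric.infDist_nonneg (x := w₀) (s := F₁ x)
              have := Metric.infDist_nonneg (x := g x - w₀) (s := F₂ x)
              have := le_max_right (‖w₀‖ - ‖L x‖) 0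
              linarith : (0:ℝ) ≤ f w₀)) with h | h
            · exact h
            · exfalso
              have h1 : Metric.infDist w₀ (F₁ x) = 0 ∧
                  Metric.infDist (g x - w₀) (F₂ x) = 0 ∧ max (‖w₀‖ - ‖L x‖) 0 = 0 := by
                have ha := Metric.infDist_nonneg (x := w₀) (s := F₁ x)
                have hb := Metric.infDist_nonneg (x := g x - w₀) (s := F₂ x)
                have hc := le_max_right (‖w₀‖ - ‖L x‖) 0
                simp only [hfdef] at h
                refine ⟨by linarith, by linarith, by linarith⟩
              have hw₀1 : w₀ ∈ F₁ x := ((hcl₁ x).mem_iff_infDist_zero (hne₁ x)).mpr h1.1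
              have hw₀2 : g x - w₀ ∈ F₂ x := ((hcl₂ x).mem_iff_infDist_zero (hne₂ x)).mpr h1.2.1
              have hw₀n : ‖w₀‖ ≤ ‖L x‖ := by
                have := h1.2.2
                by_contra hcon
                push_neg at hcon
                have : max (‖w₀‖ - ‖L x‖) 0 = ‖w₀‖ - ‖L x‖ := max_eq_left (by linarith)
                rw [this] at h1
                linarith [h1.2.2]
              have hwL : w₀ = L x := huniq x hx w₀ hw₀1 hw₀2 hw₀n
              have hdist : δ ≤ dist w₀ (L x) := by
                have h6 := hw₀C.2
                rw [Metric.mem_ball, not_lt] at h6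
                exact h6
              rw [hwL] at hdist
              simp only [dist_self] at hdist
              linarith
          obtain ⟨N, hN⟩ := (Filter.tendsto_atTop'.mp hεto) (Set.Iio (f w₀ / 3))
            (Iio_mem_nhds (by linarith))
          refine ⟨N, fun k hk => ?_⟩
          have hεk : ε k < f w₀ / 3 := hN k hk
          have hnotC : v k x ∉ C := by
            intro hmem
            have h5 : f w₀ ≤ f (v k x) := hw₀min hmem
            have := hfv k
            linarith
          have : v k x ∈ Metric.ball (L x) δ := by
            by_contra hcon
            exact hnotC ⟨hvball k, hcon⟩
          rwa [Metric.mem_ball] at this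
        · refine ⟨0, fun k _ => ?_⟩
          have : v k x ∈ Metric.ball (L x) δ := by
            by_contra hcon
            exact hC ⟨v k x, hvball k, hcon⟩
          rwa [Metric.mem_ball] at this
      · have h1 : ∀ k, v k x = 0 := fun k => if_neg hx
        have h2 : L x = 0 := dif_neg hx
        simp only [h1, h2]
        exact tendsto_const_nhds
    have hLm : Measurable L :=
      measurable_of_tendsto_metrizable hvm (tendsto_pi_nhds.mpr htend)
    have hLb : ∀ᵐ x ∂μ, ‖L x‖ ≤ k₁ x := by
      filter_upwards [hAae, hk₁b] with x hx hb
      have := hb (hL1 x hx).1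
      rwa [Metric.mem_closedBall, dist_zero_right] at this
    have hLi : Integrable L μ :=
      Integrable.mono' hk₁i hLm.aestronglyMeasurable hLb
    refine ⟨L, ⟨hLm, hLi, ?_⟩, g - L, ⟨hgm.sub hLm, hgi.sub hLi, ?_⟩, ?_⟩
    · filter_upwards [hAae] with x hx
      exact (hL1 x hx).1
    · filter_upwards [hAae] with x hx
      exact (hL1 x hx).2
    · ext x
      simp
  · rintro ⟨g₁, ⟨h₁m, h₁i, h₁f⟩, g₂, ⟨h₂m, h₂i, h₂f⟩, rfl⟩
    refine ⟨h₁m.add h₂m, h₁i.add h₂i, ?_⟩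
    filter_upwards [h₁f, h₂f] with x h1 h2
    exact Set.add_mem_add h1 h2
end

section
/- Let F : Ω → 𝒦_{bcs}(ℝ^d) be measurable. Then ∫_Ω F dμ = {0} if and only if F(x) = {0} for a.e. x ∈ Ω. -/
open MeasureTheory Topology Filter

variable {d : ℕ}

/-- hitting closed sets is measurable -/
lemma hit_closed {Ω : Type*} [MeasurableSpace Ω]
    {F : Ω → Set (EuclideanSpace ℝ (Fin d))}
    (hb : ∀ x, Bornology.IsBounded (F x)) (hcl : ∀ x, IsClosed (F x))
    (hF : SetValuedMeasurable F) (C : Set (EuclideanSpace ℝ (Fin d))) (hC : IsClosed C) :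
    MeasurableSet {x | (F x ∩ C).Nonempty} := by
  have key : {x | (F x ∩ C).Nonempty} =
      ⋂ n : ℕ, {x | (F x ∩ Metric.thickening (1/(n+1)) C).Nonempty} := by
    ext x
    simp only [Set.mem_iInter, Set.mem_setOf_eq]
    constructor
    · rintro ⟨v, hvF, hvC⟩ n
      exact ⟨v, hvF, Metric.self_subset_thickening (by positivity) C hvC⟩
    · intro hmem
      choose v hvF hvC using hmem
      obtain ⟨a, haF, φ, hφ, hlim⟩ :=
        (Metric.isCompact_of_isClosed_isBounded (hcl x) (hb x)).tendsto_subseq hvF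
      refine ⟨a, haF, ?_⟩
      rw [← hC.closure_eq]
      rw [Metric.mem_closure_iff]
      intro ε hε
      obtain ⟨N1, hN1⟩ := Metric.tendsto_atTop.1 hlim (ε/2) (by positivity)
      obtain ⟨N2, hN2⟩ : ∃ N : ℕ, 1/((N:ℝ)+1) < ε/2 := by
        obtain ⟨N, hN⟩ := exists_nat_gt (2/ε)
        refine ⟨N, ?_⟩
        rw [div_lt_iff₀ (by positivity)]
        have h2 : 2/ε < N + 1 := hN.trans (by linarith)
        rw [div_lt_iff₀ hε] at h2
        linarith
      set k := max N1 N2 with hk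
      obtain ⟨z, hzC, hz⟩ := Metric.mem_thickening_iff.1 (hvC (φ k))
      refine ⟨z, hzC, ?_⟩
      have h1 : dist (v (φ k)) a < ε/2 := hN1 k (le_max_left _ _)
      have h3 : 1/((φ k : ℝ)+1) ≤ 1/((k:ℝ)+1) := by
        apply one_div_le_one_div_of_le (by positivity)
        have : (k:ℝ) ≤ (φ k : ℝ) := Nat.cast_le.2 hφ.le_apply
        linarith
      have h4 : 1/((k:ℝ)+1) ≤ 1/((N2:ℝ)+1) := by
        apply one_div_le_one_div_of_le (by positivity)
        have : (N2:ℝ) ≤ (k:ℝ) := Nat.cast_le.2 (le_max_right _ _)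
        linarith
      calc dist a z ≤ dist a (v (φ k)) + dist (v (φ k)) z := dist_triangle _ _ _
        _ < ε/2 + ε/2 := by
            rw [dist_comm a]
            have := hz.trans_le (h3.trans h4)
            exact add_lt_add h1 (hz.trans_le ((h3.trans h4).trans hN2.le))
        _ = ε := by ring
  rw [key]
  exact MeasurableSet.iInter fun n => hF _ (Metric.isOpen_thickening)

lemma min_unique {s : Set (EuclideanSpace ℝ (Fin d))} (hconv : Convex ℝ s)
    {p u v : EuclideanSpace ℝ (Fin d)} (hu : u ∈ s) (hv : v ∈ s)
    (hmu : ∀ w ∈ s, dist p u ≤ dist p w) (hmv : ∀ w ∈ s, dist p v ≤ dist p w) : u = v := by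
  have hm : (1/2:ℝ) • u + (1/2:ℝ) • v ∈ s :=
    hconv hu hv (by norm_num) (by norm_num) (by norm_num)
  have h1 : dist p u ≤ dist p ((1/2:ℝ) • u + (1/2:ℝ) • v) := hmu _ hm
  have h2 : dist p v ≤ dist p ((1/2:ℝ) • u + (1/2:ℝ) • v) := hmv _ hm
  have hpar := parallelogram_law_with_norm ℝ (p - u) (p - v)
  have e1 : p - u + (p - v) = (2:ℝ) • (p - ((1/2:ℝ) • u + (1/2:ℝ) • v)) := by module
  have e2 : p - u - (p - v) = v - u := by abel
  rw [e1, e2, norm_smul] at hpar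
  simp only [Real.norm_ofNat] at hpar
  simp only [dist_eq_norm] at h1 h2
  have hz : ‖v - u‖ = 0 := by
    nlinarith [norm_nonneg (v - u), norm_nonneg (p - u), norm_nonneg (p - v),
      norm_nonneg (p - ((1/2:ℝ) • u + (1/2:ℝ) • v))]
  have := norm_eq_zero.1 hz
  rw [sub_eq_zero] at this
  exact this.symm

lemma exists_min (s : Set (EuclideanSpace ℝ (Fin d))) (hne : s.Nonempty)
    (hb : Bornology.IsBounded s) (hcl : IsClosed s) (p : EuclideanSpace ℝ (Fin d)) :
    ∃ v ∈ s, ∀ w ∈ s, dist p v ≤ dist p w := by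
  obtain ⟨v, hv, hmin⟩ := (Metric.isCompact_of_isClosed_isBounded hcl hb).exists_isMinOn hne
    ((continuous_const.dist continuous_id).continuousOn)
  exact ⟨v, hv, fun w hw => isMinOn_iff.1 hmin w hw⟩

lemma proj_measurable {Ω : Type*} [MeasurableSpace Ω] {F : Ω → Set (EuclideanSpace ℝ (Fin d))}
    (hne : ∀ x, (F x).Nonempty) (hb : ∀ x, Bornology.IsBounded (F x))
    (hc : ∀ x, Convex ℝ (F x)) (hcl : ∀ x, IsClosed (F x)) (hF : SetValuedMeasurable F)
    (p : EuclideanSpace ℝ (Fin d)) {P : Ω → EuclideanSpace ℝ (Fin d)}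
    (hPmem : ∀ x, P x ∈ F x) (hPmin : ∀ x, ∀ w ∈ F x, dist p (P x) ≤ dist p w) :
    Measurable P := by
  have hd : Measurable (fun x => Metric.infDist p (F x)) := by
    apply measurable_of_Iio
    intro t
    have key : (fun x => Metric.infDist p (F x)) ⁻¹' (Set.Iio t) =
        {x | (F x ∩ Metric.ball p t).Nonempty} := by
      ext x
      simp only [Set.mem_preimage, Set.mem_Iio, Set.mem_setOf_eq]
      rw [Metric.infDist_lt_iff (hne x)]
      constructor
      · rintro ⟨y, hy, hdy⟩; exact ⟨y, hy, by rwa [Metric.mem_ball, dist_comm]⟩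
      · rintro ⟨y, hy, hdy⟩; rw [Metric.mem_ball, dist_comm] at hdy; exact ⟨y, hy, hdy⟩
    rw [key]; exact hF _ Metric.isOpen_ball
  have hdistP : ∀ x, dist p (P x) = Metric.infDist p (F x) := by
    intro x
    refine le_antisymm ?_ (Metric.infDist_le_dist_of_mem (hPmem x))
    by_contra hlt
    push_neg at hlt
    obtain ⟨y, hy, hdy⟩ := (Metric.infDist_lt_iff (hne x)).1 hlt
    exact absurd hdy (not_lt.2 (hPmin x y hy))
  have hball : ∀ (c : EuclideanSpace ℝ (Fin d)) (r : ℝ),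
      MeasurableSet {x | P x ∈ Metric.closedBall c r} := by
    intro c r
    have key : {x | P x ∈ Metric.closedBall c r} =
        ⋂ m : ℕ, ⋃ s : ℚ, ({x | (s:ℝ) ≤ Metric.infDist p (F x) + 1/(m+1)} ∩
          {x | (F x ∩ (Metric.closedBall c r ∩ Metric.closedBall p (s:ℝ))).Nonempty}) := by
      ext x
      simp only [Set.mem_iInter, Set.mem_iUnion, Set.mem_inter_iff, Set.mem_setOf_eq]
      constructor
      · intro hx m
        obtain ⟨s, hs1, hs2⟩ := exists_rat_btwn
          (lt_add_of_pos_right (Metric.infDist p (F x)) (show (0:ℝ) < 1/(m+1) by positivity))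
        refine ⟨s, hs2.le, ⟨P x, hPmem x, hx, ?_⟩⟩
        rw [Metric.mem_closedBall, dist_comm, hdistP x]
        exact hs1.le
      · intro hx
        choose s hs v hv using hx
        obtain ⟨a, haF, φ, hφ, hlim⟩ :=
          (Metric.isCompact_of_isClosed_isBounded (hcl x) (hb x)).tendsto_subseq
          (fun m => (hv m).1)
        have har : a ∈ Metric.closedBall c r :=
          Metric.isClosed_closedBall.mem_of_tendsto hlim
            (Filter.Eventually.of_forall fun k => (hv (φ k)).2.1)
        have hada : dist p a ≤ Metric.infDist p (F x) := by
          have hten : Filter.Tendsto (fun k => dist p (v (φ k))) Filter.atTop (𝓝 (dist p a)) :=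
            Filter.Tendsto.dist tendsto_const_nhds hlim
          have hgen : Filter.Tendsto
              (fun k : ℕ => Metric.infDist p (F x) + 1/((k:ℝ)+1)) Filter.atTop
              (𝓝 (Metric.infDist p (F x))) := by
            have h0 : Filter.Tendsto (fun k : ℕ => 1/((k:ℝ)+1)) Filter.atTop (𝓝 0) :=
              tendsto_one_div_add_atTop_nhds_zero_nat
            simpa using tendsto_const_nhds.add h0
          refine le_of_tendsto_of_tendsto' hten hgen fun k => ?_
          have h1 : dist p (v (φ k)) ≤ (s (φ k) : ℝ) := by
            have := (hv (φ k)).2.2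
            rwa [Metric.mem_closedBall, dist_comm] at this
          have h2 : (s (φ k) : ℝ) ≤ Metric.infDist p (F x) + 1/((φ k : ℝ)+1) := hs (φ k)
          have h3 : 1/((φ k : ℝ)+1) ≤ 1/((k:ℝ)+1) := by
            apply one_div_le_one_div_of_le (by positivity)
            have : (k:ℝ) ≤ (φ k : ℝ) := Nat.cast_le.2 hφ.le_apply
            linarith
          linarith
        have hamin : ∀ w ∈ F x, dist p a ≤ dist p w := fun w hw =>
          hada.trans (Metric.infDist_le_dist_of_mem hw)
        have : a = P x := min_unique (hc x) haF (hPmem x) hamin (hPmin x)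
        rwa [this] at har
    rw [key]
    refine MeasurableSet.iInter fun m => MeasurableSet.iUnion fun s => ?_
    exact (measurableSet_le measurable_const (hd.add_const _)).inter
      (hit_closed hb hcl hF _ (Metric.isClosed_closedBall.inter Metric.isClosed_closedBall))
  apply measurable_of_isOpen
  intro U hU
  set u := TopologicalSpace.denseSeq (EuclideanSpace ℝ (Fin d))
  have hu : DenseRange u := TopologicalSpace.denseRange_denseSeq _
  have key : P ⁻¹' U = ⋃ (k : ℕ) (q : ℚ) (_ : Metric.closedBall (u k) (q:ℝ) ⊆ U),
      {x | P x ∈ Metric.closedBall (u k) (q:ℝ)} := by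
    ext x
    simp only [Set.mem_preimage, Set.mem_iUnion, Set.mem_setOf_eq]
    constructor
    · intro hx
      obtain ⟨ε, hε, hball'⟩ := Metric.isOpen_iff.1 hU _ hx
      obtain ⟨k, hk⟩ := hu.exists_dist_lt (P x) (by positivity : (0:ℝ) < ε/4)
      obtain ⟨q, hq1, hq2⟩ := exists_rat_btwn (show ε/4 < ε/2 by linarith)
      refine ⟨k, q, fun w hw => hball' ?_, ?_⟩
      · rw [Metric.mem_closedBall] at hw
        rw [Metric.mem_ball]
        calc dist w (P x) ≤ dist w (u k) + dist (u k) (P x) := dist_triangle _ _ _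
          _ ≤ (q:ℝ) + ε/4 := add_le_add hw (by rw [dist_comm] at hk; exact hk.le)
          _ < ε/2 + ε/4 := by linarith
          _ < ε := by linarith
      · rw [Metric.mem_closedBall]
        exact hk.le.trans hq1.le
    · rintro ⟨k, q, hsub, hmem⟩
      exact hsub hmem
  rw [key]
  exact MeasurableSet.iUnion fun k => MeasurableSet.iUnion fun q =>
    MeasurableSet.iUnion fun _ => hball _ _

/-- For a measurable map `F` into bounded, convex, symmetric, closed nonempty sets,
`∫ F dμ = {0}` if and only if `F x = {0}` a.e. -/
theorem aumann_integral_eq_zero_iff {Ω : Type*} [MeasurableSpace Ω]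
    (μ : Measure Ω) [SigmaFinite μ] (hcompl : μ.IsComplete)
    (F : Ω → Set (EuclideanSpace ℝ (Fin d)))
    (hne : ∀ x, (F x).Nonempty) (hb : ∀ x, Bornology.IsBounded (F x))
    (hc : ∀ x, Convex ℝ (F x)) (hs : ∀ x, ∀ v ∈ F x, -v ∈ F x)
    (hcl : ∀ x, IsClosed (F x)) (hF : SetValuedMeasurable F) :
    AumannIntegral μ F = {0} ↔ ∀ᵐ x ∂μ, F x = {0} := by
  have zero_mem : ∀ x, (0 : EuclideanSpace ℝ (Fin d)) ∈ F x := by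
    intro x
    obtain ⟨v, hv⟩ := hne x
    have h2 := hc x hv (hs x v hv) (by norm_num : (0:ℝ) ≤ 1/2) (by norm_num : (0:ℝ) ≤ 1/2)
      (by norm_num)
    have e : (1/2:ℝ) • v + (1/2:ℝ) • (-v) = 0 := by
      rw [smul_neg]; exact add_neg_cancel _
    rwa [e] at h2
  constructor
  · intro h
    rw [ae_iff]
    set N := {x | (F x ∩ ({0}ᶜ : Set (EuclideanSpace ℝ (Fin d)))).Nonempty} with hNdef
    have hNset : {x | ¬ F x = ({0} : Set (EuclideanSpace ℝ (Fin d)))} = N := by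
      ext x
      simp only [Set.mem_setOf_eq, hNdef]
      rw [Set.inter_compl_nonempty_iff]
      constructor
      · intro hx hsub
        exact hx (le_antisymm hsub (Set.singleton_subset_iff.2 (zero_mem x)))
      · intro hx heq
        exact hx (heq ▸ subset_rfl)
    rw [hNset]
    by_contra hpos
    -- index sets
    set U : Fin d → ℚ → Set (EuclideanSpace ℝ (Fin d)) :=
      fun i q => {w | (q:ℝ) < w i} with hUdef
    have hUopen : ∀ i q, IsOpen (U i q) := by
      intro i q
      have : U i q = (EuclideanSpace.proj (𝕜 := ℝ) i) ⁻¹' Set.Ioi (q:ℝ) := rfl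
      rw [this]
      exact isOpen_Ioi.preimage (EuclideanSpace.proj i).continuous
    set Bnd : ℕ → Set Ω :=
      fun n => {x | (F x ∩ (Metric.closedBall 0 (n:ℝ))ᶜ).Nonempty}ᶜ with hBnddef
    have hBndmeas : ∀ n, MeasurableSet (Bnd n) :=
      fun n => (hF _ Metric.isClosed_closedBall.isOpen_compl).compl
    have hBndmem : ∀ n x, x ∈ Bnd n ↔ F x ⊆ Metric.closedBall 0 (n:ℝ) := by
      intro n x
      simp only [hBnddef, Set.mem_compl_iff, Set.mem_setOf_eq,
        Set.inter_compl_nonempty_iff, not_not]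
    set G : Fin d × ℚ × ℕ → Set Ω := fun t =>
      if 0 < t.2.1 then {x | (F x ∩ U t.1 t.2.1).Nonempty} ∩ Bnd t.2.2 else ∅ with hGdef
    have cover : N ⊆ ⋃ t, G t := by
      rintro x ⟨v, hvF, hv0⟩
      have hvne : v ≠ 0 := hv0
      have hex : ∃ i, v i ≠ 0 := by
        by_contra hall
        push_neg at hall
        exact hvne (by ext i; exact hall i)
      obtain ⟨i, hi⟩ := hex
      set w := if 0 < v i then v else -v with hwdef
      have hwF : w ∈ F x := by
        rw [hwdef]; split
        · exact hvF
        · exact hs x v hvF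
      have hwi : 0 < w i := by
        rw [hwdef]; split
        · assumption
        · rename_i hnlt
          have : v i < 0 := lt_of_le_of_ne (not_lt.1 hnlt) hi
          show 0 < (-v) i
          simp only [PiLp.neg_apply]
          linarith
      obtain ⟨q, hq0, hqw⟩ := exists_rat_btwn hwi
      obtain ⟨r, hr⟩ := (hb x).subset_closedBall 0
      set n := ⌈max r 0⌉₊ with hndef
      have hrn : r ≤ (n:ℝ) := (le_max_left r 0).trans (Nat.le_ceil _)
      have hq0' : (0:ℚ) < q := Rat.cast_pos.mp hq0
      rw [Set.mem_iUnion]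
      refine ⟨(i, q, n), ?_⟩
      rw [hGdef]
      simp only [if_pos hq0']
      refine ⟨⟨w, hwF, hqw⟩, ?_⟩
      rw [hBndmem]
      exact hr.trans (Metric.closedBall_subset_closedBall hrn)
    obtain ⟨⟨i, q, n⟩, ht⟩ : ∃ t, μ (G t) ≠ 0 := by
      by_contra hall
      push_neg at hall
      exact hpos (le_antisymm ((measure_mono cover).trans_eq (measure_iUnion_null hall))
        (by positivity))
    have hq : 0 < q := by
      by_contra hq
      rw [hGdef] at ht
      simp only [if_neg hq] at ht
      exact ht (measure_empty)
    rw [hGdef] at ht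
    simp only [if_pos hq] at ht
    have hSmeas : MeasurableSet ({x | (F x ∩ U i q).Nonempty} ∩ Bnd n) :=
      (hF _ (hUopen i q)).inter (hBndmeas n)
    obtain ⟨B, hBmeas, hBsub, hBpos, hBfin⟩ :=
      Measure.exists_subset_measure_lt_top hSmeas (pos_iff_ne_zero.2 ht)
    -- the projection point
    set R : ℝ := (n:ℝ)^2/(q:ℝ) + 1 with hRdef
    have hq' : (0:ℝ) < q := by exact_mod_cast hq
    have hR : 0 < R := by positivity
    have hRq : (n:ℝ)^2 ≤ (q:ℝ) * R := by
      rw [hRdef, mul_add, mul_div_cancel₀ _ (ne_of_gt hq'), mul_one]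
      linarith
    set p := EuclideanSpace.single i R with hpdef
    choose P hPmem hPmin using fun x => exists_min (F x) (hne x) (hb x) (hcl x) p
    have hPmeas : Measurable P := proj_measurable hne hb hc hcl hF p hPmem hPmin
    have hnormP : ∀ x ∈ B, ‖P x‖ ≤ (n:ℝ) := by
      intro x hx
      have := ((hBndmem n x).1 (hBsub hx).2) (hPmem x)
      rwa [Metric.mem_closedBall, dist_zero_right] at this
    have hlow : ∀ x ∈ B, (q:ℝ)/2 ≤ P x i := by
      intro x hx
      obtain ⟨v, hvF, hvq⟩ := (hBsub hx).1
      have hvq : (q:ℝ) < v i := hvq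
      have hnv : ‖v‖ ≤ (n:ℝ) := by
        have := ((hBndmem n x).1 (hBsub hx).2) hvF
        rwa [Metric.mem_closedBall, dist_zero_right] at this
      have hmin := hPmin x v hvF
      rw [dist_eq_norm, dist_eq_norm] at hmin
      have hsq : ‖p - P x‖^2 ≤ ‖p - v‖^2 := by
        apply pow_le_pow_left₀ (norm_nonneg _) hmin
      rw [norm_sub_sq_real, norm_sub_sq_real] at hsq
      have hip1 : (inner ℝ p (P x) : ℝ) = R * P x i := by
        rw [hpdef, EuclideanSpace.inner_single_left]; simp
      have hip2 : (inner ℝ p v : ℝ) = R * v i := by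
        rw [hpdef, EuclideanSpace.inner_single_left]; simp
      rw [hip1, hip2] at hsq
      nlinarith [norm_nonneg (P x), sq_nonneg (‖P x‖), norm_nonneg v]
    set g := B.indicator P with hgdef
    have hgmeas : Measurable g := hPmeas.indicator hBmeas
    have hgF : ∀ x, g x ∈ F x := by
      intro x
      by_cases hx : x ∈ B
      · rw [hgdef, Set.indicator_of_mem hx]; exact hPmem x
      · rw [hgdef, Set.indicator_of_notMem hx]; exact zero_mem x
    have hPint : IntegrableOn P B μ := by
      apply Measure.integrableOn_of_bounded hBfin.ne hPmeas.aestronglyMeasurable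
      filter_upwards [ae_restrict_mem hBmeas] with x hx using hnormP x hx
    have hgint : Integrable g μ := by
      rw [hgdef, integrable_indicator_iff hBmeas]
      exact hPint
    have hint0 : (∫ x, g x ∂μ) = 0 := by
      have hmem : (∫ x, g x ∂μ) ∈ AumannIntegral μ F :=
        ⟨g, hgmeas, hgint, Filter.Eventually.of_forall hgF, rfl⟩
      rwa [h, Set.mem_singleton_iff] at hmem
    -- coordinate
    have hco : (∫ x, g x i ∂μ) = 0 := by
      have hci : (∫ x, g x i ∂μ) = (EuclideanSpace.proj (𝕜 := ℝ) i) (∫ x, g x ∂μ) :=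
        (EuclideanSpace.proj (𝕜 := ℝ) i).integral_comp_comm hgint
      rw [hci, hint0]
      simp
    have hindi : (fun x => g x i) = B.indicator (fun x => P x i) := by
      funext x
      by_cases hx : x ∈ B
      · rw [hgdef]; simp [Set.indicator_of_mem hx]
      · rw [hgdef]; simp [Set.indicator_of_notMem hx]
    have hPiint : IntegrableOn (fun x => P x i) B μ := by
      have := (EuclideanSpace.proj (𝕜 := ℝ) i).integrable_comp hPint
      simpa [IntegrableOn] using this
    have hlb : (q:ℝ)/2 * (μ B).toReal ≤ ∫ x in B, P x i ∂μ :=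
      setIntegral_ge_of_const_le_real hBmeas hBfin.ne hlow hPiint
    rw [hindi, integral_indicator hBmeas] at hco
    have htr : 0 < (μ B).toReal := ENNReal.toReal_pos (ne_of_gt hBpos) hBfin.ne
    nlinarith
  · intro h
    ext y
    simp only [Set.mem_singleton_iff, AumannIntegral, Set.mem_setOf_eq]
    constructor
    · rintro ⟨g, hgm, hgi, hgF, rfl⟩
      have hz : g =ᵐ[μ] 0 := by
        filter_upwards [hgF, h] with x hgx hFx
        rw [hFx] at hgx
        exact hgx
      rw [integral_congr_ae hz]
      simp
    · rintro rfl
      exact ⟨0, measurable_const, integrable_zero _ _ _,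
        Filter.Eventually.of_forall (fun x => zero_mem x), integral_zero _ _⟩
end

section
/- (Hölder's inequality for Aumann integrals) Let ρ be a norm on ℝ^d, 1 < p < ∞, H : Ω → 𝒦_{bcs}(ℝ^d) measurable, and f, g : Ω → [0,∞) measurable such that f^p H and g^{p'} H are integrably bounded. Then ρ(∫_Ω f g H dμ) ≤ ρ(∫_Ω f^p H dμ)^{1/p} · ρ(∫_Ω g^{p'} H dμ)^{1/p'}, where ρ(K) = sup{ρ(v) : v ∈ K} and 1/p + 1/p' = 1. -/
open MeasureTheory
open scoped Pointwise

variable {d : ℕ}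

/-- A norm as a plain function on ℝ^d. -/
def IsNormFun (p : EuclideanSpace ℝ (Fin d) → ℝ) : Prop :=
  (∀ u v, p (u + v) ≤ p u + p v) ∧ (∀ (a : ℝ) v, p (a • v) = |a| * p v) ∧
    (∀ v, p v = 0 → v = 0)

/-- `ρ(K) = sup {ρ(v) : v ∈ K}` for a bounded set `K`. -/
noncomputable def setNorm (ρ : EuclideanSpace ℝ (Fin d) → ℝ)
    (K : Set (EuclideanSpace ℝ (Fin d))) : ℝ :=
  sSup (ρ '' K)

section Aux

variable {ρ : EuclideanSpace ℝ (Fin d) → ℝ}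

lemma IsNormFun.zero (hρ : IsNormFun ρ) : ρ 0 = 0 := by
  have := hρ.2.1 0 0
  simpa using this

lemma IsNormFun.neg' (hρ : IsNormFun ρ) (v : EuclideanSpace ℝ (Fin d)) : ρ (-v) = ρ v := by
  have := hρ.2.1 (-1) v
  simpa using this

lemma IsNormFun.nonneg (hρ : IsNormFun ρ) (v : EuclideanSpace ℝ (Fin d)) : 0 ≤ ρ v := by
  have h := hρ.1 v (-v)
  rw [add_neg_cancel, hρ.zero, hρ.neg'] at h
  linarith

lemma IsNormFun.exists_bound (hρ : IsNormFun ρ) :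
    ∃ C : ℝ, 0 ≤ C ∧ ∀ v, ρ v ≤ C * ‖v‖ := by
  classical
  refine ⟨∑ i, ρ (EuclideanSpace.single i (1:ℝ)),
    Finset.sum_nonneg fun i _ => hρ.nonneg _, fun v => ?_⟩
  have habs : ∀ i, |v i| ≤ ‖v‖ := by
    intro i
    rw [EuclideanSpace.norm_eq]
    have h1 : |v i| = Real.sqrt (‖v i‖ ^ 2) := by
      rw [Real.sqrt_sq_eq_abs, Real.norm_eq_abs, abs_abs]
    rw [h1]
    exact Real.sqrt_le_sqrt (Finset.single_le_sum
      (fun j _ => sq_nonneg ‖v j‖) (Finset.mem_univ i))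
  have hsum : ∀ (s : Finset (Fin d)) (w : Fin d → EuclideanSpace ℝ (Fin d)),
      ρ (∑ i ∈ s, w i) ≤ ∑ i ∈ s, ρ (w i) := by
    intro s w
    induction s using Finset.cons_induction with
    | empty => simpa using le_of_eq hρ.zero
    | cons a s ha ih =>
      rw [Finset.sum_cons, Finset.sum_cons]
      exact (hρ.1 _ _).trans (by linarith)
  have hv : ∑ i, v i • EuclideanSpace.single i (1:ℝ) = v := by
    ext j
    rw [WithLp.ofLp_sum, Finset.sum_apply]
    simp [EuclideanSpace.single_apply]
  calc ρ v = ρ (∑ i, v i • EuclideanSpace.single i (1:ℝ)) := by rw [hv]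
    _ ≤ ∑ i, ρ (v i • EuclideanSpace.single i (1:ℝ)) := hsum _ _
    _ = ∑ i, |v i| * ρ (EuclideanSpace.single i (1:ℝ)) :=
        Finset.sum_congr rfl fun i _ => hρ.2.1 _ _
    _ ≤ ∑ i, ‖v‖ * ρ (EuclideanSpace.single i (1:ℝ)) :=
        Finset.sum_le_sum fun i _ =>
          mul_le_mul_of_nonneg_right (habs i) (hρ.nonneg _)
    _ = (∑ i, ρ (EuclideanSpace.single i (1:ℝ))) * ‖v‖ := by
        rw [← Finset.mul_sum, mul_comm]

lemma memLp_rpow_of_integrable {Ω : Type*} [MeasurableSpace Ω] {μ : Measure Ω} {r : Ω → ℝ}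
    (hr : Integrable r μ) (h0 : ∀ x, 0 ≤ r x) {p : ℝ} (hp : 0 < p) :
    MemLp (fun x => r x ^ (1/p)) (ENNReal.ofReal p) μ := by
  have h1 : MemLp r 1 μ := memLp_one_iff_integrable.mpr hr
  have h2 := h1.norm_rpow_div (ENNReal.ofReal (1/p))
  have he : (1 : ENNReal) / ENNReal.ofReal (1/p) = ENNReal.ofReal p := by
    rw [one_div, one_div, ENNReal.ofReal_inv_of_pos hp, inv_inv]
  have ht : (ENNReal.ofReal (1/p)).toReal = 1/p :=
    ENNReal.toReal_ofReal (by positivity)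
  rw [he, ht] at h2
  have hfun : (fun x => ‖r x‖ ^ (1/p)) = fun x => r x ^ (1/p) :=
    funext fun x => by rw [Real.norm_of_nonneg (h0 x)]
  rwa [hfun] at h2

end Aux

/-- Hölder's inequality for Aumann integrals of convex-set valued maps. -/
theorem aumann_holder {Ω : Type*} [MeasurableSpace Ω]
    (μ : Measure Ω) [SigmaFinite μ] (hcompl : μ.IsComplete)
    (ρ : EuclideanSpace ℝ (Fin d) → ℝ) (hρ : IsNormFun ρ)
    (p q : ℝ) (hp : 1 < p) (hpq : 1 / p + 1 / q = 1)
    (H : Ω → Set (EuclideanSpace ℝ (Fin d)))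
    (hne : ∀ x, (H x).Nonempty) (hb : ∀ x, Bornology.IsBounded (H x))
    (hc : ∀ x, Convex ℝ (H x)) (hs : ∀ x, ∀ v ∈ H x, -v ∈ H x)
    (hcl : ∀ x, IsClosed (H x)) (hH : SetValuedMeasurable H)
    (f g : Ω → ℝ) (hf : Measurable f) (hg : Measurable g)
    (hf0 : ∀ x, 0 ≤ f x) (hg0 : ∀ x, 0 ≤ g x)
    (hfH : IntegrablyBounded μ (fun x => f x ^ p • H x))
    (hgH : IntegrablyBounded μ (fun x => g x ^ q • H x)) :
    setNorm ρ (AumannIntegral μ (fun x => (f x * g x) • H x)) ≤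
      setNorm ρ (AumannIntegral μ (fun x => f x ^ p • H x)) ^ (1 / p) *
      setNorm ρ (AumannIntegral μ (fun x => g x ^ q • H x)) ^ (1 / q) := by
  classical
  obtain ⟨C, hC0, hCb⟩ := hρ.exists_bound
  have hp0 : (0:ℝ) < p := lt_trans one_pos hp
  have hpq' : Real.HolderConjugate p q := Real.holderConjugate_iff.mpr ⟨hp, by rw [← one_div, ← one_div]; exact hpq⟩
  have hq : 1 < q := hpq'.symm.lt
  have hq0 : (0:ℝ) < q := lt_trans one_pos hq
  -- 0 belongs to every H x
  have h0H : ∀ x, (0 : EuclideanSpace ℝ (Fin d)) ∈ H x := by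
    intro x
    obtain ⟨v, hv⟩ := hne x
    have h2 := hc x hv (hs x v hv) (by norm_num : (0:ℝ) ≤ 1/2)
      (by norm_num : (0:ℝ) ≤ 1/2) (by norm_num)
    simpa [smul_neg] using h2
  obtain ⟨k₁, hk₁0, hk₁i, hk₁b⟩ := hfH
  obtain ⟨k₂, hk₂0, hk₂i, hk₂b⟩ := hgH
  -- abbreviations
  set A := setNorm ρ (AumannIntegral μ (fun x => f x ^ p • H x)) with hA_def
  set B := setNorm ρ (AumannIntegral μ (fun x => g x ^ q • H x)) with hB_def
  have hA0 : 0 ≤ A := Real.sSup_nonneg (by rintro r ⟨v, -, rfl⟩; exact hρ.nonneg v)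
  have hB0 : 0 ≤ B := Real.sSup_nonneg (by rintro r ⟨v, -, rfl⟩; exact hρ.nonneg v)
  -- bounds for the Aumann integrals
  have bddA : ∀ (F : Ω → Set (EuclideanSpace ℝ (Fin d))) (k : Ω → ℝ), Integrable k μ →
      (∀ᵐ x ∂μ, F x ⊆ Metric.closedBall 0 (k x)) →
      ∀ y ∈ AumannIntegral μ F, ρ y ≤ C * ∫ x, k x ∂μ := by
    rintro F k hki hkb y ⟨h', hm', hi', hsel', rfl⟩
    have h1 : ‖∫ x, h' x ∂μ‖ ≤ ∫ x, k x ∂μ := by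
      refine (norm_integral_le_integral_norm _).trans ?_
      refine integral_mono_ae hi'.norm hki ?_
      filter_upwards [hsel', hkb] with x hx hbx
      have h2 := hbx hx
      rwa [Metric.mem_closedBall, dist_zero_right] at h2
    exact (hCb _).trans (mul_le_mul_of_nonneg_left h1 hC0)
  have bdd1 : BddAbove (ρ '' AumannIntegral μ (fun x => f x ^ p • H x)) := by
    refine ⟨C * ∫ x, k₁ x ∂μ, ?_⟩
    rintro r ⟨y, hy, rfl⟩
    exact bddA _ _ hk₁i hk₁b y hy
  have bdd2 : BddAbove (ρ '' AumannIntegral μ (fun x => g x ^ q • H x)) := by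
    refine ⟨C * ∫ x, k₂ x ∂μ, ?_⟩
    rintro r ⟨y, hy, rfl⟩
    exact bddA _ _ hk₂i hk₂b y hy
  have hA : ∀ y ∈ AumannIntegral μ (fun x => f x ^ p • H x), ρ y ≤ A :=
    fun y hy => le_csSup bdd1 ⟨y, hy, rfl⟩
  have hB : ∀ y ∈ AumannIntegral μ (fun x => g x ^ q • H x), ρ y ≤ B :=
    fun y hy => le_csSup bdd2 ⟨y, hy, rfl⟩
  -- main estimate: each element of the left Aumann integral is bounded
  refine Real.sSup_le ?_
    (mul_nonneg (Real.rpow_nonneg hA0 _) (Real.rpow_nonneg hB0 _))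
  rintro r ⟨y, hy, rfl⟩
  by_cases hy0 : y = 0
  · rw [hy0, hρ.zero]
    exact mul_nonneg (Real.rpow_nonneg hA0 _) (Real.rpow_nonneg hB0 _)
  obtain ⟨h, hmh, hih, hsel, hyint⟩ := hy
  -- Hahn-Banach: a linear functional ℓ ≤ ρ with ℓ y = ρ y
  obtain ⟨ℓ₀, hext, hℓle⟩ := exists_extension_of_le_sublinear
    (LinearPMap.mkSpanSingleton y (ρ y) hy0) ρ
    (fun c hc x => by rw [hρ.2.1, abs_of_pos hc])
    hρ.1
    (by
      rintro ⟨z, hz⟩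
      obtain ⟨c, rfl⟩ := Submodule.mem_span_singleton.1 hz
      rw [LinearPMap.mkSpanSingleton'_apply]
      show c • ρ y ≤ ρ (c • y)
      rw [hρ.2.1, smul_eq_mul]
      exact mul_le_mul_of_nonneg_right (le_abs_self c) (hρ.nonneg y))
  set ℓ : EuclideanSpace ℝ (Fin d) →L[ℝ] ℝ := LinearMap.toContinuousLinearMap ℓ₀ with hℓ_def
  have hℓv : ∀ v, ℓ v = ℓ₀ v := fun v => rfl
  have hℓle' : ∀ v, ℓ v ≤ ρ v := fun v => hℓle v
  have hℓy : ℓ y = ρ y := by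
    have h2 := hext ⟨y, Submodule.mem_span_singleton_self y⟩
    rw [LinearPMap.mkSpanSingleton_apply] at h2
    exact h2
  -- the sign function
  set σ : Ω → ℝ := fun x => if 0 ≤ ℓ (h x) then 1 else -1 with hσ_def
  have hσm : Measurable σ := Measurable.ite
    (measurableSet_le measurable_const (ℓ.continuous.measurable.comp hmh))
    measurable_const measurable_const
  have hσabs : ∀ x, σ x * ℓ (h x) = |ℓ (h x)| := by
    intro x
    by_cases hx : 0 ≤ ℓ (h x)
    · simp only [hσ_def, hx, if_true, one_mul]
      exact (abs_of_nonneg hx).symm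
    · simp only [hσ_def, hx, if_false, neg_one_mul]
      exact (abs_of_neg (lt_of_not_ge hx)).symm
  have hσH : ∀ x u, u ∈ H x → σ x • u ∈ H x := by
    intro x u hu
    by_cases hx : 0 ≤ ℓ (h x)
    · simp only [hσ_def, hx, if_true, one_smul]
      exact hu
    · simp only [hσ_def, hx, if_false, neg_one_smul]
      exact hs x u hu
  -- the core construction, for either exponent
  have main : ∀ (e : ℝ), 0 < e → ∀ (φ : Ω → ℝ), Measurable φ → (∀ x, 0 ≤ φ x) →
      ∀ (k : Ω → ℝ), Integrable k μ →
      (∀ᵐ x ∂μ, φ x ^ e • H x ⊆ Metric.closedBall 0 (k x)) →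
      Integrable (fun x => φ x ^ e * (f x * g x)⁻¹ * |ℓ (h x)|) μ ∧
      ∫ x, φ x ^ e * (f x * g x)⁻¹ * |ℓ (h x)| ∂μ ≤
        setNorm ρ (AumannIntegral μ (fun x => φ x ^ e • H x)) := by
    intro e he φ hφm hφ0 k hki hkb
    have hcm : Measurable fun x => φ x ^ e * (f x * g x)⁻¹ := by
      have h1 : Measurable fun x => φ x ^ e :=
        ((continuous_id.rpow_const fun x => Or.inr he.le).measurable).comp hφm
      exact h1.mul ((hf.mul hg).inv)
    have h₁m : Measurable (fun x => (σ x * (φ x ^ e * (f x * g x)⁻¹)) • h x) :=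
      (hσm.mul hcm).smul hmh
    have hsel₁ : ∀ᵐ x ∂μ, (σ x * (φ x ^ e * (f x * g x)⁻¹)) • h x ∈ φ x ^ e • H x := by
      filter_upwards [hsel] with x hx
      by_cases hfg : f x * g x = 0
      · have hx0 : h x = 0 := by
          rw [hfg, Set.zero_smul_set (hne x)] at hx
          simpa using hx
        rw [hx0, smul_zero]
        exact ⟨0, h0H x, smul_zero _⟩
      · obtain ⟨u, hu, huv⟩ := hx
        have heq : (σ x * (φ x ^ e * (f x * g x)⁻¹)) • h x = φ x ^ e • (σ x • u) := by
          rw [← huv, smul_smul, smul_smul]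
          congr 1
          field_simp [left_ne_zero_of_mul hfg, right_ne_zero_of_mul hfg]
        rw [heq]
        exact Set.smul_mem_smul_set (hσH x u hu)
    have h₁i : Integrable (fun x => (σ x * (φ x ^ e * (f x * g x)⁻¹)) • h x) μ := by
      refine Integrable.mono' hki h₁m.aestronglyMeasurable ?_
      filter_upwards [hsel₁, hkb] with x hx hbx
      have h2 := hbx hx
      rwa [Metric.mem_closedBall, dist_zero_right] at h2
    have hℓeq : ∀ x, ℓ ((σ x * (φ x ^ e * (f x * g x)⁻¹)) • h x) =
        φ x ^ e * (f x * g x)⁻¹ * |ℓ (h x)| := by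
      intro x
      rw [ContinuousLinearMap.map_smul, smul_eq_mul, mul_comm (σ x), mul_assoc, hσabs]
    have hfeq : (fun x => ℓ ((σ x * (φ x ^ e * (f x * g x)⁻¹)) • h x)) =
        fun x => φ x ^ e * (f x * g x)⁻¹ * |ℓ (h x)| := funext hℓeq
    constructor
    · have h2 := ℓ.integrable_comp h₁i
      rwa [hfeq] at h2
    · have h3 : ∫ x, φ x ^ e * (f x * g x)⁻¹ * |ℓ (h x)| ∂μ =
          ℓ (∫ x, (σ x * (φ x ^ e * (f x * g x)⁻¹)) • h x ∂μ) := by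
        rw [← ContinuousLinearMap.integral_comp_comm ℓ h₁i]
        exact integral_congr_ae (ae_of_all _ fun x => (hℓeq x).symm)
      rw [h3]
      refine (hℓle' _).trans ?_
      refine le_csSup ⟨C * ∫ x, k x ∂μ, ?_⟩ ⟨_, ⟨_, h₁m, h₁i, hsel₁, rfl⟩, rfl⟩
      rintro r ⟨y', hy', rfl⟩
      exact bddA _ _ hki hkb y' hy'
  obtain ⟨hint₁, hle₁⟩ := main p hp0 f hf hf0 k₁ hk₁i hk₁b
  obtain ⟨hint₂, hle₂⟩ := main q hq0 g hg hg0 k₂ hk₂i hk₂b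
  have hr₁0 : ∀ x, 0 ≤ f x ^ p * (f x * g x)⁻¹ * |ℓ (h x)| := fun x =>
    mul_nonneg (mul_nonneg (Real.rpow_nonneg (hf0 x) _)
      (inv_nonneg.2 (mul_nonneg (hf0 x) (hg0 x)))) (abs_nonneg _)
  have hr₂0 : ∀ x, 0 ≤ g x ^ q * (f x * g x)⁻¹ * |ℓ (h x)| := fun x =>
    mul_nonneg (mul_nonneg (Real.rpow_nonneg (hg0 x) _)
      (inv_nonneg.2 (mul_nonneg (hf0 x) (hg0 x)))) (abs_nonneg _)
  -- the pointwise Hoelder identity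
  have hkey : ∀ᵐ x ∂μ, |ℓ (h x)| =
      (f x ^ p * (f x * g x)⁻¹ * |ℓ (h x)|) ^ (1/p) *
      (g x ^ q * (f x * g x)⁻¹ * |ℓ (h x)|) ^ (1/q) := by
    filter_upwards [hsel] with x hx
    by_cases hfg : f x * g x = 0
    · have hx0 : h x = 0 := by
        rw [hfg, Set.zero_smul_set (hne x)] at hx
        simpa using hx
      rw [hx0]
      simp only [map_zero, abs_zero, mul_zero]
      rw [Real.zero_rpow (one_div_ne_zero hp0.ne'), zero_mul]
    · have hf' : 0 < f x := lt_of_le_of_ne (hf0 x)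
        (Ne.symm (left_ne_zero_of_mul hfg))
      have hg' : 0 < g x := lt_of_le_of_ne (hg0 x)
        (Ne.symm (right_ne_zero_of_mul hfg))
      have hfg' : (0:ℝ) < f x * g x := mul_pos hf' hg'
      have hs0 : (0:ℝ) ≤ (f x * g x)⁻¹ * |ℓ (h x)| :=
        mul_nonneg (inv_nonneg.2 hfg'.le) (abs_nonneg _)
      have hc₁t : f x ^ p * (f x * g x)⁻¹ * |ℓ (h x)| =
          f x ^ p * ((f x * g x)⁻¹ * |ℓ (h x)|) := by ring
      have hc₂t : g x ^ q * (f x * g x)⁻¹ * |ℓ (h x)| =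
          g x ^ q * ((f x * g x)⁻¹ * |ℓ (h x)|) := by ring
      rw [hc₁t, hc₂t,
        Real.mul_rpow (Real.rpow_nonneg (hf0 x) _) hs0,
        Real.mul_rpow (Real.rpow_nonneg (hg0 x) _) hs0,
        one_div, one_div,
        Real.rpow_rpow_inv (hf0 x) hp0.ne',
        Real.rpow_rpow_inv (hg0 x) hq0.ne']
      have hss : ((f x * g x)⁻¹ * |ℓ (h x)|) ^ p⁻¹ *
          ((f x * g x)⁻¹ * |ℓ (h x)|) ^ q⁻¹ = (f x * g x)⁻¹ * |ℓ (h x)| := by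
        rw [← Real.rpow_add' hs0 (by rw [hpq'.inv_add_inv_eq_one]; norm_num),
          hpq'.inv_add_inv_eq_one, Real.rpow_one]
      calc |ℓ (h x)| = (f x * g x) * ((f x * g x)⁻¹ * |ℓ (h x)|) := by
            field_simp
        _ = f x * ((f x * g x)⁻¹ * |ℓ (h x)|) ^ p⁻¹ *
            (g x * ((f x * g x)⁻¹ * |ℓ (h x)|) ^ q⁻¹) := by
            rw [show f x * ((f x * g x)⁻¹ * |ℓ (h x)|) ^ p⁻¹ *
                (g x * ((f x * g x)⁻¹ * |ℓ (h x)|) ^ q⁻¹) =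
                (f x * g x) * (((f x * g x)⁻¹ * |ℓ (h x)|) ^ p⁻¹ *
                ((f x * g x)⁻¹ * |ℓ (h x)|) ^ q⁻¹) from by ring, hss]
  -- put everything together
  have hρy : ρ y = ∫ x, ℓ (h x) ∂μ := by
    rw [← hℓy, ← hyint]
    exact (ContinuousLinearMap.integral_comp_comm ℓ hih).symm
  have hstep1 : ρ y ≤ ∫ x, |ℓ (h x)| ∂μ := by
    rw [hρy]
    exact integral_mono (ℓ.integrable_comp hih) (ℓ.integrable_comp hih).abs
      fun x => le_abs_self _
  have hstep2 : ∫ x, |ℓ (h x)| ∂μ =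
      ∫ x, (f x ^ p * (f x * g x)⁻¹ * |ℓ (h x)|) ^ (1/p) *
        (g x ^ q * (f x * g x)⁻¹ * |ℓ (h x)|) ^ (1/q) ∂μ :=
    integral_congr_ae hkey
  have hstep3 : ∫ x, (f x ^ p * (f x * g x)⁻¹ * |ℓ (h x)|) ^ (1/p) *
        (g x ^ q * (f x * g x)⁻¹ * |ℓ (h x)|) ^ (1/q) ∂μ ≤
      (∫ x, ((f x ^ p * (f x * g x)⁻¹ * |ℓ (h x)|) ^ (1/p)) ^ p ∂μ) ^ (1/p) *
      (∫ x, ((g x ^ q * (f x * g x)⁻¹ * |ℓ (h x)|) ^ (1/q)) ^ q ∂μ) ^ (1/q) :=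
    integral_mul_le_Lp_mul_Lq_of_nonneg hpq'
      (ae_of_all _ fun x => Real.rpow_nonneg (hr₁0 x) _)
      (ae_of_all _ fun x => Real.rpow_nonneg (hr₂0 x) _)
      (memLp_rpow_of_integrable hint₁ hr₁0 hp0)
      (memLp_rpow_of_integrable hint₂ hr₂0 hq0)
  have he₁ : ∫ x, ((f x ^ p * (f x * g x)⁻¹ * |ℓ (h x)|) ^ (1/p)) ^ p ∂μ =
      ∫ x, f x ^ p * (f x * g x)⁻¹ * |ℓ (h x)| ∂μ :=
    integral_congr_ae (ae_of_all _ fun x => by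
      simp only [one_div, Real.rpow_inv_rpow (hr₁0 x) hp0.ne'])
  have he₂ : ∫ x, ((g x ^ q * (f x * g x)⁻¹ * |ℓ (h x)|) ^ (1/q)) ^ q ∂μ =
      ∫ x, g x ^ q * (f x * g x)⁻¹ * |ℓ (h x)| ∂μ :=
    integral_congr_ae (ae_of_all _ fun x => by
      simp only [one_div, Real.rpow_inv_rpow (hr₂0 x) hq0.ne'])
  have hfin1 : (∫ x, ((f x ^ p * (f x * g x)⁻¹ * |ℓ (h x)|) ^ (1/p)) ^ p ∂μ) ^ (1/p) ≤
      A ^ (1/p) := by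
    rw [he₁]
    exact Real.rpow_le_rpow (integral_nonneg hr₁0) hle₁ (by positivity)
  have hfin2 : (∫ x, ((g x ^ q * (f x * g x)⁻¹ * |ℓ (h x)|) ^ (1/q)) ^ q ∂μ) ^ (1/q) ≤
      B ^ (1/q) := by
    rw [he₂]
    exact Real.rpow_le_rpow (integral_nonneg hr₂0) hle₂ (by positivity)
  calc ρ y ≤ ∫ x, |ℓ (h x)| ∂μ := hstep1
    _ ≤ (∫ x, ((f x ^ p * (f x * g x)⁻¹ * |ℓ (h x)|) ^ (1/p)) ^ p ∂μ) ^ (1/p) *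
        (∫ x, ((g x ^ q * (f x * g x)⁻¹ * |ℓ (h x)|) ^ (1/q)) ^ q ∂μ) ^ (1/q) := by
        rw [hstep2]; exact hstep3
    _ ≤ A ^ (1/p) * B ^ (1/q) := by
        refine mul_le_mul hfin1 hfin2 (Real.rpow_nonneg ?_ _) (Real.rpow_nonneg hA0 _)
        exact integral_nonneg fun x => Real.rpow_nonneg (Real.rpow_nonneg (hr₂0 x) _) _
end

section
/- (Minkowski's inequality for Aumann integrals) Let ρ be a norm on ℝ^d, 1 < p < ∞, H : Ω → 𝒦_{bcs}(ℝ^d) measurable, and f, g : Ω → [0,∞) measurable with f^p H and g^p H integrably bounded. Then ρ(∫_Ω (f+g)^p H dμ)^{1/p} ≤ ρ(∫_Ω f^p H dμ)^{1/p} + ρ(∫_Ω g^p H dμ)^{1/p}. -/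
open MeasureTheory
open scoped Pointwise ENNReal NNReal

variable {d : ℕ}

namespace IsNormFun

variable {ρ : EuclideanSpace ℝ (Fin d) → ℝ}

lemma zero_s17 (hρ : IsNormFun ρ) : ρ 0 = 0 := by
  simpa using hρ.2.1 0 0

lemma negg (hρ : IsNormFun ρ) (v : EuclideanSpace ℝ (Fin d)) : ρ (-v) = ρ v := by
  simpa using hρ.2.1 (-1) v

lemma nonneg_s17 (hρ : IsNormFun ρ) (v : EuclideanSpace ℝ (Fin d)) : 0 ≤ ρ v := by
  have h1 := hρ.1 v (-v)
  rw [add_neg_cancel, hρ.zero_s17, hρ.negg] at h1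
  linarith

lemma exists_bound_s17 (hρ : IsNormFun ρ) : ∃ M : ℝ, 0 ≤ M ∧ ∀ v, ρ v ≤ M * ‖v‖ := by
  refine ⟨∑ i : Fin d, ρ (EuclideanSpace.single i 1),
    Finset.sum_nonneg fun i _ => hρ.nonneg_s17 _, fun v => ?_⟩
  have hsum : ∀ (s : Finset (Fin d)) (w : Fin d → EuclideanSpace ℝ (Fin d)),
      ρ (∑ i ∈ s, w i) ≤ ∑ i ∈ s, ρ (w i) := by
    intro s w
    induction s using Finset.cons_induction with
    | empty => simp [hρ.zero_s17]
    | cons a s ha ih =>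
      rw [Finset.sum_cons, Finset.sum_cons]
      exact (hρ.1 _ _).trans (by linarith)
  have habs : ∀ i : Fin d, |v i| ≤ ‖v‖ := by
    intro i
    have h := abs_real_inner_le_norm (EuclideanSpace.single i (1 : ℝ)) v
    simpa [EuclideanSpace.inner_single_left, EuclideanSpace.norm_single] using h
  have hv : v = ∑ i : Fin d, v i • EuclideanSpace.single i (1 : ℝ) := by
    have h := (EuclideanSpace.basisFun (Fin d) ℝ).sum_repr v
    simp only [EuclideanSpace.basisFun_repr, EuclideanSpace.basisFun_apply] at h
    exact h.symm
  calc ρ v = ρ (∑ i : Fin d, v i • EuclideanSpace.single i (1 : ℝ)) := by rw [← hv]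
    _ ≤ ∑ i : Fin d, ρ (v i • EuclideanSpace.single i (1 : ℝ)) := hsum _ _
    _ = ∑ i : Fin d, |v i| * ρ (EuclideanSpace.single i (1 : ℝ)) := by
        simp only [hρ.2.1]
    _ ≤ ∑ i : Fin d, ‖v‖ * ρ (EuclideanSpace.single i (1 : ℝ)) := by
        refine Finset.sum_le_sum fun i _ => ?_
        exact mul_le_mul_of_nonneg_right (habs i) (hρ.nonneg_s17 _)
    _ = (∑ i : Fin d, ρ (EuclideanSpace.single i (1 : ℝ))) * ‖v‖ := by
        rw [← Finset.mul_sum, mul_comm]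
end IsNormFun


namespace IsNormFun
variable {d : ℕ} {ρ : EuclideanSpace ℝ (Fin d) → ℝ}

lemma exists_dual (hρ : IsNormFun ρ) (y : EuclideanSpace ℝ (Fin d)) :
    ∃ ξ : EuclideanSpace ℝ (Fin d) →ₗ[ℝ] ℝ, ξ y = ρ y ∧ ∀ w, ξ w ≤ ρ w := by
  rcases eq_or_ne y 0 with rfl | hy
  · exact ⟨0, by simp [hρ.zero_s17], fun w => by simpa using hρ.nonneg_s17 w⟩
  · set F := LinearPMap.mkSpanSingleton (K := ℝ) (L := ℝ) (σ := RingHom.id ℝ) y (ρ y) hy with hF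
    have hdom : ∀ z : F.domain, F z ≤ ρ z := by
      rintro ⟨zv, hzmem⟩
      have hz : zv ∈ Submodule.span ℝ {y} := by
        rwa [LinearPMap.domain_mkSpanSingleton] at hzmem
      obtain ⟨c, hc⟩ := Submodule.mem_span_singleton.mp hz
      subst hc
      have happ : F ⟨c • y, hzmem⟩ = c • ρ y := LinearPMap.mkSpanSingleton'_apply _ _ _ c _
      rw [happ]
      have : ρ (c • y) = |c| * ρ y := hρ.2.1 c y
      rw [smul_eq_mul]
      calc c * ρ y ≤ |c| * ρ y := mul_le_mul_of_nonneg_right (le_abs_self c) (hρ.nonneg_s17 y)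
        _ = ρ (c • y) := this.symm
    obtain ⟨ξ, hext, hle⟩ := exists_extension_of_le_sublinear F ρ
      (fun c hc x => by rw [hρ.2.1, abs_of_pos hc]) hρ.1 hdom
    have hymem : y ∈ F.domain := by
      rw [hF, LinearPMap.domain_mkSpanSingleton]
      exact Submodule.mem_span_singleton_self y
    refine ⟨ξ, ?_, hle⟩
    have h1 := hext ⟨y, hymem⟩
    have h2 : F ⟨y, hymem⟩ = ρ y := LinearPMap.mkSpanSingleton'_apply_self _ _ _ _
    rw [← h2]; exact h1

lemma abs_le (hρ : IsNormFun ρ) {ξ : EuclideanSpace ℝ (Fin d) →ₗ[ℝ] ℝ}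
    (hξ : ∀ w, ξ w ≤ ρ w) (w : EuclideanSpace ℝ (Fin d)) : |ξ w| ≤ ρ w := by
  rcases abs_cases (ξ w) with ⟨he, _⟩ | ⟨he, _⟩
  · rw [he]; exact hξ w
  · rw [he]
    have h1 := hξ (-w)
    rw [map_neg, hρ.negg] at h1
    linarith

end IsNormFun

lemma key_lemma {d : ℕ} {Ω : Type*} [MeasurableSpace Ω] (μ : Measure Ω)
    {ρ : EuclideanSpace ℝ (Fin d) → ℝ} (hρ : IsNormFun ρ) {M : ℝ}
    (hM0 : 0 ≤ M) (hM : ∀ w, ρ w ≤ M * ‖w‖)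
    {p : ℝ} (hp : 0 < p)
    {H : Ω → Set (EuclideanSpace ℝ (Fin d))}
    (hne : ∀ x, (H x).Nonempty) (hc : ∀ x, Convex ℝ (H x))
    (hs : ∀ x, ∀ v ∈ H x, -v ∈ H x)
    {f σ : Ω → ℝ} (hf : Measurable f) (hσ : Measurable σ)
    (hf0 : ∀ x, 0 ≤ f x) (hσ0 : ∀ x, 0 ≤ σ x) (hfσ : ∀ x, f x ≤ σ x)
    (hfH : IntegrablyBounded μ (fun x => f x ^ p • H x))
    {h : Ω → EuclideanSpace ℝ (Fin d)} (hhm : Measurable h) (hhi : Integrable h μ)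
    (hmem : ∀ᵐ x ∂μ, h x ∈ σ x ^ p • H x)
    {ξ : EuclideanSpace ℝ (Fin d) →ₗ[ℝ] ℝ} (hξ : ∀ w, ξ w ≤ ρ w) :
    Integrable (fun x => f x ^ p * (|ξ (h x)| / σ x ^ p)) μ ∧
      ∫ x, f x ^ p * (|ξ (h x)| / σ x ^ p) ∂μ ≤
        setNorm ρ (AumannIntegral μ (fun x => f x ^ p • H x)) := by
  classical
  set ξc : EuclideanSpace ℝ (Fin d) →L[ℝ] ℝ := LinearMap.toContinuousLinearMap ξ with hξcdef
  have hξc_apply : ∀ w, ξc w = ξ w := fun w => rfl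
  set s : Ω → ℝ := fun x => if ξ (h x) < 0 then (-1 : ℝ) else 1 with hsdef
  have hs_meas : Measurable s := by
    refine Measurable.ite ?_ measurable_const measurable_const
    exact measurableSet_lt (ξc.continuous.measurable.comp hhm) measurable_const
  have hs_abs : ∀ x, |s x| = 1 := by
    intro x; by_cases hx : ξ (h x) < 0 <;> simp [hsdef, hx]
  have hs_mul : ∀ x, s x * ξ (h x) = |ξ (h x)| := by
    intro x; by_cases hx : ξ (h x) < 0
    · simp [hsdef, hx, abs_of_neg hx]
    · simp [hsdef, hx, abs_of_nonneg (not_lt.mp hx)]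
  set c : Ω → ℝ := fun x => s x * (f x / σ x) ^ p with hcdef
  have hc_meas : Measurable c :=
    hs_meas.mul ((Real.continuous_rpow_const hp.le).measurable.comp (hf.div hσ))
  set v : Ω → EuclideanSpace ℝ (Fin d) := fun x => if σ x = 0 then 0 else c x • h x with hvdef
  have hv_meas : Measurable v := by
    refine Measurable.ite ?_ measurable_const (hc_meas.smul hhm)
    exact hσ (measurableSet_singleton 0)
  have hc_abs : ∀ x, σ x ≠ 0 → |c x| ≤ 1 := by
    intro x hx
    have hσpos : 0 < σ x := lt_of_le_of_ne (hσ0 x) (Ne.symm hx)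
    have h1 : (f x / σ x) ^ p ≤ 1 :=
      Real.rpow_le_one (div_nonneg (hf0 x) (hσ0 x)) ((div_le_one hσpos).mpr (hfσ x)) hp.le
    have h2 : (0:ℝ) ≤ (f x / σ x) ^ p := Real.rpow_nonneg (div_nonneg (hf0 x) (hσ0 x)) p
    simp only [hcdef, abs_mul, hs_abs, one_mul, abs_of_nonneg h2]
    exact h1
  have hv_norm : ∀ x, ‖v x‖ ≤ ‖h x‖ := by
    intro x
    by_cases hx : σ x = 0
    · simp [hvdef, hx]
    · simp only [hvdef, if_neg hx, norm_smul, Real.norm_eq_abs]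
      calc |c x| * ‖h x‖ ≤ 1 * ‖h x‖ :=
            mul_le_mul_of_nonneg_right (hc_abs x hx) (norm_nonneg _)
        _ = ‖h x‖ := one_mul _
  have hvi : Integrable v μ :=
    hhi.norm.mono' hv_meas.aestronglyMeasurable
      (Filter.Eventually.of_forall fun x => by simpa using hv_norm x)
  have hξv : ∀ x, ξ (v x) = f x ^ p * (|ξ (h x)| / σ x ^ p) := by
    intro x
    by_cases hx : σ x = 0
    · have hfx : f x = 0 := le_antisymm (hx ▸ hfσ x) (hf0 x)
      simp [hvdef, hx, hfx, Real.zero_rpow hp.ne']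
    · have hσpos : 0 < σ x := lt_of_le_of_ne (hσ0 x) (Ne.symm hx)
      have hσp : σ x ^ p ≠ 0 := (Real.rpow_pos_of_pos hσpos p).ne'
      have h1 : ξ (v x) = c x * ξ (h x) := by
        simp [hvdef, if_neg hx, _root_.map_smul, smul_eq_mul]
      rw [h1]
      simp only [hcdef]
      rw [Real.div_rpow (hf0 x) (hσ0 x)]
      rw [show s x * (f x ^ p / σ x ^ p) * ξ (h x)
            = (f x ^ p / σ x ^ p) * (s x * ξ (h x)) from by ring, hs_mul x]
      ring
  have hvmem : ∀ᵐ x ∂μ, v x ∈ f x ^ p • H x := by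
    filter_upwards [hmem] with x hx
    by_cases hx0 : σ x = 0
    · obtain ⟨z, hz⟩ := hne x
      have h0H : (0 : EuclideanSpace ℝ (Fin d)) ∈ H x := by
        have hmid := hc x hz (hs x z hz)
          (by norm_num : (0:ℝ) ≤ (1:ℝ)/2) (by norm_num : (0:ℝ) ≤ (1:ℝ)/2) (by norm_num)
        simpa using hmid
      rw [Set.mem_smul_set]
      exact ⟨0, h0H, by simp [hvdef, hx0]⟩
    · rw [Set.mem_smul_set] at hx
      obtain ⟨u, huH, hu⟩ := hx
      have hσpos : 0 < σ x := lt_of_le_of_ne (hσ0 x) (Ne.symm hx0)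
      have hσp : σ x ^ p ≠ 0 := (Real.rpow_pos_of_pos hσpos p).ne'
      rw [Set.mem_smul_set]
      refine ⟨s x • u, ?_, ?_⟩
      · by_cases hsx : ξ (h x) < 0
        · simp only [hsdef, if_pos hsx]
          simpa using hs x u huH
        · simp only [hsdef, if_neg hsx]
          simpa using huH
      · simp only [hvdef, if_neg hx0, ← hu, hcdef, smul_smul]
        congr 1
        rw [Real.div_rpow (hf0 x) (hσ0 x)]
        field_simp
  have hAmem : (∫ x, v x ∂μ) ∈ AumannIntegral μ (fun x => f x ^ p • H x) :=
    ⟨v, hv_meas, hvi, hvmem, rfl⟩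
  obtain ⟨k, hk0, hki, hkb⟩ := hfH
  have hBdd : BddAbove (ρ '' AumannIntegral μ (fun x => f x ^ p • H x)) := by
    refine ⟨M * ∫ x, k x ∂μ, ?_⟩
    rintro t ⟨z, ⟨m, hmm, hmi, hmmem, rfl⟩, rfl⟩
    have h1 : ‖∫ x, m x ∂μ‖ ≤ ∫ x, ‖m x‖ ∂μ := norm_integral_le_integral_norm m
    have h2 : ∫ x, ‖m x‖ ∂μ ≤ ∫ x, k x ∂μ := by
      refine integral_mono_ae hmi.norm hki ?_
      filter_upwards [hmmem, hkb] with x hx1 hx2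
      simpa [mem_closedBall_zero_iff] using hx2 hx1
    calc ρ (∫ x, m x ∂μ) ≤ M * ‖∫ x, m x ∂μ‖ := hM _
      _ ≤ M * ∫ x, k x ∂μ := mul_le_mul_of_nonneg_left (h1.trans h2) hM0
  have hle1 : ρ (∫ x, v x ∂μ) ≤ setNorm ρ (AumannIntegral μ (fun x => f x ^ p • H x)) :=
    le_csSup hBdd (Set.mem_image_of_mem ρ hAmem)
  have hIv : Integrable (fun x => ξ (v x)) μ := ξc.integrable_comp hvi
  have hfeq : (fun x => f x ^ p * (|ξ (h x)| / σ x ^ p)) = fun x => ξ (v x) :=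
    funext fun x => (hξv x).symm
  constructor
  · rw [hfeq]; exact hIv
  · rw [hfeq]
    have hcomm : ∫ x, ξc (v x) ∂μ = ξc (∫ x, v x ∂μ) := ξc.integral_comp_comm hvi
    calc ∫ x, ξ (v x) ∂μ = ξ (∫ x, v x ∂μ) := hcomm
      _ ≤ ρ (∫ x, v x ∂μ) := hξ _
      _ ≤ _ := hle1

/-- Minkowski's inequality for Aumann integrals of convex-set valued maps. -/
theorem aumann_minkowski {Ω : Type*} [MeasurableSpace Ω]
    (μ : Measure Ω) [SigmaFinite μ] (hcompl : μ.IsComplete)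
    (ρ : EuclideanSpace ℝ (Fin d) → ℝ) (hρ : IsNormFun ρ)
    (p : ℝ) (hp : 1 < p)
    (H : Ω → Set (EuclideanSpace ℝ (Fin d)))
    (hne : ∀ x, (H x).Nonempty) (hb : ∀ x, Bornology.IsBounded (H x))
    (hc : ∀ x, Convex ℝ (H x)) (hs : ∀ x, ∀ v ∈ H x, -v ∈ H x)
    (hcl : ∀ x, IsClosed (H x)) (hH : SetValuedMeasurable H)
    (f g : Ω → ℝ) (hf : Measurable f) (hg : Measurable g)
    (hf0 : ∀ x, 0 ≤ f x) (hg0 : ∀ x, 0 ≤ g x)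
    (hfH : IntegrablyBounded μ (fun x => f x ^ p • H x))
    (hgH : IntegrablyBounded μ (fun x => g x ^ p • H x)) :
    setNorm ρ (AumannIntegral μ (fun x => (f x + g x) ^ p • H x)) ^ (1 / p) ≤
      setNorm ρ (AumannIntegral μ (fun x => f x ^ p • H x)) ^ (1 / p) +
      setNorm ρ (AumannIntegral μ (fun x => g x ^ p • H x)) ^ (1 / p) := by
  obtain ⟨M, hM0, hM⟩ := hρ.exists_bound_s17
  have hp0 : 0 < p := lt_trans one_pos hp
  have hpinv0 : (0:ℝ) ≤ 1 / p := by positivity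
  have hρ0 : ∀ K : Set (EuclideanSpace ℝ (Fin d)), 0 ≤ setNorm ρ K := by
    intro K
    refine Real.sSup_nonneg ?_
    rintro t ⟨z, _, rfl⟩
    exact hρ.nonneg_s17 z
  set A := setNorm ρ (AumannIntegral μ (fun x => f x ^ p • H x)) with hAdef
  set B := setNorm ρ (AumannIntegral μ (fun x => g x ^ p • H x)) with hBdef
  have hA0 : 0 ≤ A := hρ0 _
  have hB0 : 0 ≤ B := hρ0 _
  have hRHS0 : 0 ≤ A ^ (1/p) + B ^ (1/p) :=
    add_nonneg (Real.rpow_nonneg hA0 _) (Real.rpow_nonneg hB0 _)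
  have hσ0 : ∀ x, 0 ≤ f x + g x := fun x => add_nonneg (hf0 x) (hg0 x)
  have hSle : setNorm ρ (AumannIntegral μ (fun x => (f x + g x) ^ p • H x))
      ≤ (A ^ (1/p) + B ^ (1/p)) ^ p := by
    refine Real.sSup_le ?_ (Real.rpow_nonneg hRHS0 p)
    rintro t ⟨y, hy, rfl⟩
    obtain ⟨ξ, hξy, hξle⟩ := hρ.exists_dual y
    obtain ⟨h, hhm, hhi, hmem, hint⟩ := hy
    set ξc : EuclideanSpace ℝ (Fin d) →L[ℝ] ℝ := LinearMap.toContinuousLinearMap ξ with hξcdef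
    have hmem' : ∀ᵐ x ∂μ, h x ∈ (fun x => f x + g x) x ^ p • H x := hmem
    obtain ⟨hIf, hlef⟩ := key_lemma μ hρ hM0 hM hp0 hne hc hs hf (hf.add hg)
      hf0 hσ0 (fun x => le_add_of_nonneg_right (hg0 x)) hfH hhm hhi hmem' hξle
    obtain ⟨hIg, hleg⟩ := key_lemma μ hρ hM0 hM hp0 hne hc hs hg (hf.add hg)
      hg0 hσ0 (fun x => le_add_of_nonneg_left (hf0 x)) hgH hhm hhi hmem' hξle
    set θ : Ω → ℝ := fun x => |ξ (h x)| / (f x + g x) ^ p with hθdef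
    have hθ0 : ∀ x, 0 ≤ θ x := fun x =>
      div_nonneg (abs_nonneg _) (Real.rpow_nonneg (hσ0 x) p)
    have hθm : Measurable θ := by
      refine Measurable.div ?_ ?_
      · exact (ξc.continuous.measurable.comp hhm).abs
      · exact (Real.continuous_rpow_const hp0.le).measurable.comp (hf.add hg)
    have hIf' : Integrable (fun x => f x ^ p * θ x) μ := hIf
    have hIg' : Integrable (fun x => g x ^ p * θ x) μ := hIg
    have hlef' : ∫ x, f x ^ p * θ x ∂μ ≤ A := hlef
    have hleg' : ∫ x, g x ^ p * θ x ∂μ ≤ B := hleg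
    have heq : ∀ᵐ x ∂μ, (f x + g x) ^ p * θ x = |ξ (h x)| := by
      filter_upwards [hmem] with x hx
      by_cases h0 : f x + g x = 0
      · have hz : h x = 0 := by
          rw [h0, Real.zero_rpow hp0.ne', Set.zero_smul_set (hne x)] at hx
          simpa using hx
        simp [hθdef, hz, h0, Real.zero_rpow hp0.ne']
      · have hσp : (f x + g x) ^ p ≠ 0 :=
          (Real.rpow_pos_of_pos (lt_of_le_of_ne (hσ0 x) (Ne.symm h0)) p).ne'
        simp only [hθdef]
        field_simp
    have hIh : Integrable (fun x => |ξ (h x)|) μ := (ξc.integrable_comp hhi).abs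
    have heq' : (fun x => |ξ (h x)|) =ᵐ[μ] fun x => (f x + g x) ^ p * θ x := by
      filter_upwards [heq] with x hx
      exact hx.symm
    have hI0 : Integrable (fun x => (f x + g x) ^ p * θ x) μ := hIh.congr heq'
    -- Minkowski for lintegrals
    set F : Ω → ℝ≥0∞ := fun x => ENNReal.ofReal (f x * θ x ^ (1/p)) with hFdef
    set G : Ω → ℝ≥0∞ := fun x => ENNReal.ofReal (g x * θ x ^ (1/p)) with hGdef
    have hθpm : Measurable fun x => θ x ^ (1/p) :=
      (Real.continuous_rpow_const hpinv0).measurable.comp hθm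
    have hFm : AEMeasurable F μ :=
      (ENNReal.measurable_ofReal.comp (hf.mul hθpm)).aemeasurable
    have hGm : AEMeasurable G μ :=
      (ENNReal.measurable_ofReal.comp (hg.mul hθpm)).aemeasurable
    have hθpow : ∀ x, (θ x ^ (1/p)) ^ p = θ x := by
      intro x
      rw [← Real.rpow_mul (hθ0 x), one_div_mul_cancel hp0.ne', Real.rpow_one]
    have key_eq : ∀ (φ : Ω → ℝ), (∀ x, 0 ≤ φ x) → ∀ x : Ω,
        ENNReal.ofReal (φ x * θ x ^ (1/p)) ^ p = ENNReal.ofReal (φ x ^ p * θ x) := by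
      intro φ hφ0 x
      rw [ENNReal.ofReal_rpow_of_nonneg
          (mul_nonneg (hφ0 x) (Real.rpow_nonneg (hθ0 x) _)) hp0.le,
        Real.mul_rpow (hφ0 x) (Real.rpow_nonneg (hθ0 x) _), hθpow x]
    have hmink := ENNReal.lintegral_Lp_add_le hFm hGm hp.le
    have e0 : ∫⁻ x, (F + G) x ^ p ∂μ
        = ENNReal.ofReal (∫ x, (f x + g x) ^ p * θ x ∂μ) := by
      have hFG : ∀ x, (F + G) x ^ p = ENNReal.ofReal ((f x + g x) ^ p * θ x) := by
        intro x
        have h1 : (F + G) x = ENNReal.ofReal ((f x + g x) * θ x ^ (1/p)) := by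
          simp only [Pi.add_apply, hFdef, hGdef]
          rw [← ENNReal.ofReal_add (mul_nonneg (hf0 x) (Real.rpow_nonneg (hθ0 x) _))
            (mul_nonneg (hg0 x) (Real.rpow_nonneg (hθ0 x) _))]
          ring_nf
        rw [h1, key_eq (fun x => f x + g x) hσ0 x]
      rw [lintegral_congr hFG,
        ← ofReal_integral_eq_lintegral_ofReal hI0
          (Filter.Eventually.of_forall fun x =>
            mul_nonneg (Real.rpow_nonneg (hσ0 x) p) (hθ0 x))]
    have e1 : ∫⁻ x, F x ^ p ∂μ = ENNReal.ofReal (∫ x, f x ^ p * θ x ∂μ) := by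
      rw [lintegral_congr (key_eq f hf0),
        ← ofReal_integral_eq_lintegral_ofReal hIf'
          (Filter.Eventually.of_forall fun x =>
            mul_nonneg (Real.rpow_nonneg (hf0 x) p) (hθ0 x))]
    have e2 : ∫⁻ x, G x ^ p ∂μ = ENNReal.ofReal (∫ x, g x ^ p * θ x ∂μ) := by
      rw [lintegral_congr (key_eq g hg0),
        ← ofReal_integral_eq_lintegral_ofReal hIg'
          (Filter.Eventually.of_forall fun x =>
            mul_nonneg (Real.rpow_nonneg (hg0 x) p) (hθ0 x))]
    rw [e0, e1, e2] at hmink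
    have hI0nn : 0 ≤ ∫ x, (f x + g x) ^ p * θ x ∂μ :=
      integral_nonneg fun x => mul_nonneg (Real.rpow_nonneg (hσ0 x) p) (hθ0 x)
    have hI1nn : 0 ≤ ∫ x, f x ^ p * θ x ∂μ :=
      integral_nonneg fun x => mul_nonneg (Real.rpow_nonneg (hf0 x) p) (hθ0 x)
    have hI2nn : 0 ≤ ∫ x, g x ^ p * θ x ∂μ :=
      integral_nonneg fun x => mul_nonneg (Real.rpow_nonneg (hg0 x) p) (hθ0 x)
    rw [ENNReal.ofReal_rpow_of_nonneg hI0nn hpinv0,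
      ENNReal.ofReal_rpow_of_nonneg hI1nn hpinv0,
      ENNReal.ofReal_rpow_of_nonneg hI2nn hpinv0,
      ← ENNReal.ofReal_add (Real.rpow_nonneg hI1nn _) (Real.rpow_nonneg hI2nn _),
      ENNReal.ofReal_le_ofReal_iff
        (add_nonneg (Real.rpow_nonneg hI1nn _) (Real.rpow_nonneg hI2nn _))] at hmink
    -- ρ y ≤ I0
    have hy0 : ρ y ≤ ∫ x, (f x + g x) ^ p * θ x ∂μ := by
      have h1 : ∫ x, ξc (h x) ∂μ = ξc (∫ x, h x ∂μ) := ξc.integral_comp_comm hhi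
      have h2 : ∫ x, ξ (h x) ∂μ ≤ ∫ x, |ξ (h x)| ∂μ :=
        integral_mono (ξc.integrable_comp hhi) hIh fun x => le_abs_self _
      have h3 : ∫ x, |ξ (h x)| ∂μ = ∫ x, (f x + g x) ^ p * θ x ∂μ :=
        integral_congr_ae heq'
      calc ρ y = ξ y := hξy.symm
        _ = ξ (∫ x, h x ∂μ) := by rw [hint]
        _ = ∫ x, ξ (h x) ∂μ := h1.symm
        _ ≤ ∫ x, |ξ (h x)| ∂μ := h2
        _ = _ := h3
    have c1 : (∫ x, f x ^ p * θ x ∂μ) ^ (1/p) ≤ A ^ (1/p) :=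
      Real.rpow_le_rpow hI1nn hlef' hpinv0
    have c2 : (∫ x, g x ^ p * θ x ∂μ) ^ (1/p) ≤ B ^ (1/p) :=
      Real.rpow_le_rpow hI2nn hleg' hpinv0
    calc ρ y ≤ ∫ x, (f x + g x) ^ p * θ x ∂μ := hy0
      _ = ((∫ x, (f x + g x) ^ p * θ x ∂μ) ^ (1/p)) ^ p := by
          rw [← Real.rpow_mul hI0nn, one_div_mul_cancel hp0.ne', Real.rpow_one]
      _ ≤ ((∫ x, f x ^ p * θ x ∂μ) ^ (1/p) + (∫ x, g x ^ p * θ x ∂μ) ^ (1/p)) ^ p :=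
          Real.rpow_le_rpow (Real.rpow_nonneg hI0nn _) hmink hp0.le
      _ ≤ (A ^ (1/p) + B ^ (1/p)) ^ p :=
          Real.rpow_le_rpow
            (add_nonneg (Real.rpow_nonneg hI1nn _) (Real.rpow_nonneg hI2nn _))
            (add_le_add c1 c2) hp0.le
  calc setNorm ρ (AumannIntegral μ (fun x => (f x + g x) ^ p • H x)) ^ (1/p)
      ≤ ((A ^ (1/p) + B ^ (1/p)) ^ p) ^ (1/p) :=
        Real.rpow_le_rpow (hρ0 _) hSle hpinv0
    _ = A ^ (1/p) + B ^ (1/p) := by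
        rw [← Real.rpow_mul hRHS0, mul_one_div_cancel hp0.ne', Real.rpow_one]
end
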